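/- arXiv:1608.07516 — 6 statements merged into one kernel-verified Lean document; each statement's English description precedes it below -/
import Mathlib

section
/- For an open interval (a,b), f ∈ C^{n−1}(a,b), and any tuple of (not necessarily distinct) real numbers λ₁, ..., λₙ ∈ (a,b), there exists ξ ∈ [min λᵢ, max λᵢ] such that [λ₁, ..., λₙ]_f = f^{(n−1)}(ξ)/(n−1)!. -/
/-- Recursive divided difference on a list of points (for distinct points). -/
noncomputable def divDiff {K : Type*} [Field K] (f : K → K) : List K → K
  | [] => 0
  | [x] => f x
  | x :: y :: xs =>
      (divDiff f ((x :: y :: xs).dropLast) - divDiff f (y :: xs)) /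
        (x - (y :: xs).getLast (List.cons_ne_nil y xs))
  termination_by l => l.length
  decreasing_by all_goals simp [List.length_dropLast]

open Set
section AuxDD
open Polynomial


lemma coeff_mul_bd (P : ℝ[X]) (c t : ℝ) (m : ℕ) (h : P.coeff (m+1) = 0) :
    (P * (C c * (X - C t))).coeff (m+1) = c * P.coeff m := by
  have e : P * (C c * (X - C t)) = C c * P * X - C (c*t) * P := by
    rw [C_mul]; ring
  rw [e, coeff_sub, coeff_mul_X, coeff_C_mul, coeff_C_mul, h, mul_zero, sub_zero]

lemma divDiff_eq_coeff (f : ℝ → ℝ) :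
    ∀ l : List ℝ, l ≠ [] → l.Nodup →
      divDiff f l = (Lagrange.interpolate l.toFinset id f).coeff (l.length - 1)
  | [], h, _ => absurd rfl h
  | [x], _, _ => by
      simp [divDiff, Lagrange.interpolate_singleton]
  | x :: y :: xs, _, hnd => by
      have hAeq := divDiff_eq_coeff f ((x :: y :: xs).dropLast) (by simp)
        (hnd.sublist (List.dropLast_sublist _))
      have hBeq := divDiff_eq_coeff f (y :: xs) (by simp) hnd.of_cons
      set l : List ℝ := x :: y :: xs with hl
      set t : ℝ := (y :: xs).getLast (List.cons_ne_nil y xs) with ht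
      have htl : l.getLast (by simp) = t := by
        simp only [hl, ht]
        exact List.getLast_cons (List.cons_ne_nil y xs)
      have htmem : t ∈ (y :: xs) := ht ▸ List.getLast_mem _
      have hxnot : x ∉ (y :: xs) := (List.nodup_cons.mp hnd).1
      have hxt : x ≠ t := fun h => hxnot (h ▸ htmem)
      -- toFinset facts
      have hdrop : l.dropLast ++ [t] = l := by
        rw [← htl]; exact List.dropLast_append_getLast _
      have htnotdrop : t ∉ l.dropLast := by
        have : l.Nodup := hnd
        rw [← hdrop] at this
        intro hmem
        exact (List.nodup_append.mp this).2.2 t hmem t (by simp) rfl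
      have hA : l.dropLast.toFinset = l.toFinset.erase t := by
        have e1 : l.toFinset = insert t l.dropLast.toFinset := by
          conv_lhs => rw [← hdrop]
          ext z; simp [List.toFinset_append, or_comm]
        rw [e1, Finset.erase_insert (by simpa using htnotdrop)]
      have hB : (y :: xs).toFinset = l.toFinset.erase x := by
        have e1 : l.toFinset = insert x (y :: xs).toFinset := by simp [hl]
        rw [e1, Finset.erase_insert (by simpa using hxnot)]
      have hxmem : x ∈ l.toFinset := by simp [hl]
      have htmem' : t ∈ l.toFinset := by
        rw [List.mem_toFinset, hl]
        exact List.mem_cons_of_mem _ htmem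
      have hcards : (l.toFinset.erase t).card = xs.length + 1 := by
        rw [Finset.card_erase_of_mem htmem', List.toFinset_card_of_nodup hnd]
        simp [hl]
      have hcards' : (l.toFinset.erase x).card = xs.length + 1 := by
        rw [Finset.card_erase_of_mem hxmem, List.toFinset_card_of_nodup hnd]
        simp [hl]
      have key := Lagrange.interpolate_eq_add_interpolate_erase
        (v := (id : ℝ → ℝ)) (r := f) (Function.injective_id.injOn) hxmem htmem' hxt
      set P : ℝ[X] := Lagrange.interpolate (l.toFinset.erase t) id f with hP
      set Q : ℝ[X] := Lagrange.interpolate (l.toFinset.erase x) id f with hQ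
      have hPtop : P.coeff (xs.length + 1) = 0 := by
        apply coeff_eq_zero_of_degree_lt
        have := Lagrange.degree_interpolate_lt (s := l.toFinset.erase t)
          (r := f) (Function.injective_id.injOn)
        rwa [hcards] at this
      have hQtop : Q.coeff (xs.length + 1) = 0 := by
        apply coeff_eq_zero_of_degree_lt
        have := Lagrange.degree_interpolate_lt (s := l.toFinset.erase x)
          (r := f) (Function.injective_id.injOn)
        rwa [hcards'] at this
      have hlen : l.length - 1 = xs.length + 1 := by simp [hl]
      have hlenA : l.dropLast.length - 1 = xs.length := by simp [hl]
      have hcoeff : (Lagrange.interpolate l.toFinset id f).coeff (xs.length + 1)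
          = (x - t)⁻¹ * P.coeff xs.length + (t - x)⁻¹ * Q.coeff xs.length := by
        rw [key, coeff_add]
        rw [show Lagrange.basisDivisor (id x) (id t) = C (x - t)⁻¹ * (X - C t) from rfl,
          show Lagrange.basisDivisor (id t) (id x) = C (t - x)⁻¹ * (X - C x) from rfl,
          coeff_mul_bd _ _ _ _ hPtop, coeff_mul_bd _ _ _ _ hQtop]
      have hdd : divDiff f l = (divDiff f l.dropLast - divDiff f (y :: xs)) / (x - t) := by
        rw [hl, divDiff]
      rw [hdd, hAeq, hBeq, hlen, hcoeff, hlenA, hA, hB, ← hP, ← hQ]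
      simp only [List.length_cons, Nat.add_sub_cancel]
      have hxt' : x - t ≠ 0 := sub_ne_zero.mpr hxt
      have e2 : (t - x)⁻¹ = -(x - t)⁻¹ := by rw [← neg_sub, inv_neg]
      rw [e2, div_eq_mul_inv]
      ring
  termination_by l => l.length

lemma contDiff_polyeval (p : ℝ[X]) {n : WithTop ℕ∞} : ContDiff ℝ n fun x : ℝ => p.eval x := by
  induction p using Polynomial.induction_on' with
  | add p q hp hq => simpa [Polynomial.eval_add] using hp.add hq
  | monomial k c =>
    simpa [Polynomial.eval_monomial] using (contDiff_const (c := c)).mul (contDiff_id.pow k)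

lemma iteratedDeriv_polyeval (k : ℕ) : ∀ (p : ℝ[X]),
    iteratedDeriv k (fun x : ℝ => p.eval x) = fun x => (Polynomial.derivative^[k] p).eval x := by
  induction k with
  | zero => intro p; simp
  | succ k ih =>
    intro p
    rw [iteratedDeriv_succ']
    have e : deriv (fun x : ℝ => p.eval x) = fun x => (Polynomial.derivative p).eval x := by
      funext z; exact Polynomial.deriv (p := p) (x := z)
    rw [e, ih, Function.iterate_succ_apply]

lemma iterate_derivative_eq_C (m : ℕ) : ∀ (p : ℝ[X]), p.natDegree ≤ m →
    Polynomial.derivative^[m] p = Polynomial.C ((m.factorial : ℝ) * p.coeff m) := by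
  induction m with
  | zero =>
    intro p h
    simpa using (Polynomial.eq_C_of_natDegree_le_zero h)
  | succ m ih =>
    intro p h
    rw [Function.iterate_succ_apply, ih (Polynomial.derivative p)
      (le_trans (Polynomial.natDegree_derivative_le p) (by omega)),
      Polynomial.coeff_derivative]
    congr 1
    push_cast [Nat.factorial_succ]
    ring

lemma rolle_iter (a b : ℝ) : ∀ (k : ℕ) (g : ℝ → ℝ), ContDiffOn ℝ k g (Ioo a b) →
    ∀ (x : Fin (k+1) → ℝ), StrictMono x → (∀ i, x i ∈ Ioo a b) → (∀ i, g (x i) = 0) →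
    ∃ ξ ∈ Icc (x 0) (x (Fin.last k)), ξ ∈ Ioo a b ∧ iteratedDerivWithin k g (Ioo a b) ξ = 0 := by
  intro k
  induction k with
  | zero =>
    intro g hg x hx hmem hz
    exact ⟨x 0, ⟨le_refl _, le_refl _⟩, hmem 0, by simpa [iteratedDerivWithin_zero] using hz 0⟩
  | succ k ih =>
    intro g hg x hx hmem hz
    have hio : IsOpen (Ioo a b) := isOpen_Ioo
    have hu : UniqueDiffOn ℝ (Ioo a b) := hio.uniqueDiffOn
    have hIccsub : ∀ i : Fin (k+1), Icc (x i.castSucc) (x i.succ) ⊆ Ioo a b := fun i =>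
      Icc_subset_Ioo (hmem i.castSucc).1 (hmem i.succ).2
    have hstep : ∀ i : Fin (k+1), ∃ c ∈ Ioo (x i.castSucc) (x i.succ), deriv g c = 0 := by
      intro i
      exact exists_deriv_eq_zero (hx (show i.castSucc < i.succ from Fin.castSucc_lt_succ))
        (hg.continuousOn.mono (hIccsub i)) (by rw [hz, hz])
    choose y hy hy0 using hstep
    have hymem : ∀ i, y i ∈ Ioo a b := fun i => hIccsub i (Ioo_subset_Icc_self (hy i))
    set g' : ℝ → ℝ := derivWithin g (Ioo a b) with hg'def
    have hg'z : ∀ i, g' (y i) = 0 := by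
      intro i
      rw [hg'def, derivWithin_of_isOpen hio (hymem i)]
      exact hy0 i
    have hymono : StrictMono y := by
      intro i j hij
      have h1 : y i < x i.succ := (hy i).2
      have h2 : x j.castSucc < y j := (hy j).1
      have h3 : (i.succ : Fin (k+2)) ≤ j.castSucc := by
        rw [Fin.le_def]
        have := Fin.lt_def.mp hij
        simp only [Fin.val_succ, Fin.coe_castSucc]
        omega
      have h4 : x i.succ ≤ x j.castSucc := hx.monotone h3
      linarith
    have hg' : ContDiffOn ℝ k g' (Ioo a b) := by
      have hle : (k : WithTop ℕ∞) + 1 ≤ ((k + 1 : ℕ) : WithTop ℕ∞) := by norm_cast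
      exact hg.derivWithin hu hle
    obtain ⟨ξ, hξIcc, hξmem, hξ0⟩ := ih g' hg' y hymono hymem hg'z
    refine ⟨ξ, ⟨?_, ?_⟩, hξmem, ?_⟩
    · have h5 : x 0 < y 0 := by
        have := (hy 0).1
        rwa [Fin.castSucc_zero] at this
      exact le_trans h5.le hξIcc.1
    · have h6 : y (Fin.last k) < x (Fin.last (k+1)) := by
        have := (hy (Fin.last k)).2
        rwa [Fin.succ_last] at this
      exact le_trans hξIcc.2 h6.le
    · rw [iteratedDerivWithin_succ']
      exact hξ0

lemma iteratedDerivWithin_isOpen' {s : Set ℝ} (hs : IsOpen s) {x : ℝ} (hx : x ∈ s) (k : ℕ)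
    (h : ℝ → ℝ) : iteratedDerivWithin k h s x = iteratedDeriv k h x := by
  rw [iteratedDerivWithin_eq_iteratedFDerivWithin, iteratedDeriv_eq_iteratedFDeriv,
    iteratedFDerivWithin_of_isOpen k hs hx]

lemma divDiff_mvt (n : ℕ) (a b : ℝ) (f : ℝ → ℝ) (hf : ContDiffOn ℝ n f (Ioo a b))
    (Λ : Fin (n+1) → ℝ) (hΛ : ∀ i, Λ i ∈ Ioo a b) (hinj : Function.Injective Λ) :
    ∃ ξ ∈ Icc (⨅ i, Λ i) (⨆ i, Λ i), ξ ∈ Ioo a b ∧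
      divDiff f (List.ofFn Λ) = iteratedDerivWithin n f (Ioo a b) ξ / (n.factorial : ℝ) := by
  have hio : IsOpen (Ioo a b) := isOpen_Ioo
  have hu : UniqueDiffOn ℝ (Ioo a b) := hio.uniqueDiffOn
  have hnd : (List.ofFn Λ).Nodup := List.nodup_ofFn.mpr hinj
  have hne : (List.ofFn Λ) ≠ [] := by
    apply List.ne_nil_of_length_pos
    simp
  set s : Finset ℝ := (List.ofFn Λ).toFinset with hs
  have hcard : s.card = n + 1 := by
    rw [hs, List.toFinset_card_of_nodup hnd, List.length_ofFn]
  have hmemS : ∀ c ∈ s, c ∈ Ioo a b ∧ ∃ j, Λ j = c := by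
    intro c hc
    rw [hs, List.mem_toFinset, List.mem_ofFn] at hc
    obtain ⟨j, hj⟩ := hc
    exact ⟨hj ▸ hΛ j, j, hj⟩
  set P : ℝ[X] := Lagrange.interpolate s id f with hP
  have hdd : divDiff f (List.ofFn Λ) = P.coeff n := by
    rw [divDiff_eq_coeff f _ hne hnd, List.length_ofFn, ← hs, ← hP, Nat.add_sub_cancel]
  have hPnat : P.natDegree ≤ n := by
    have h1 := Lagrange.degree_interpolate_le (s := s) (r := f) Function.injective_id.injOn
    rw [hcard, Nat.add_sub_cancel] at h1
    exact Polynomial.natDegree_le_iff_degree_le.mpr h1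
  -- the function vanishing at all nodes
  set g : ℝ → ℝ := f - fun t => P.eval t with hg
  have hPev : ∀ i, P.eval (Λ i) = f (Λ i) := by
    intro i
    apply Lagrange.eval_interpolate_at_node _ Function.injective_id.injOn
    rw [hs, List.mem_toFinset, List.mem_ofFn]
    exact ⟨i, rfl⟩
  have hPsmooth : ∀ m : WithTop ℕ∞, ContDiffOn ℝ m (fun t : ℝ => P.eval t) (Ioo a b) :=
    fun m => (contDiff_polyeval P).contDiffOn
  have hgsmooth : ContDiffOn ℝ n g (Ioo a b) := hf.sub (hPsmooth _)
  -- sorted nodes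
  set e := s.orderIsoOfFin hcard with he
  set x : Fin (n+1) → ℝ := fun i => (e i : ℝ) with hx
  have hxmono : StrictMono x := fun i j hij => e.strictMono hij
  have hxS : ∀ i, x i ∈ s := fun i => (e i).2
  have hxmem : ∀ i, x i ∈ Ioo a b := fun i => (hmemS _ (hxS i)).1
  have hgz : ∀ i, g (x i) = 0 := by
    intro i
    obtain ⟨j, hj⟩ := (hmemS _ (hxS i)).2
    rw [hg]
    simp only [Pi.sub_apply]
    rw [← hj, hPev j, sub_self]
  obtain ⟨ξ, hξIcc, hξmem, hξ0⟩ := rolle_iter a b n g hgsmooth x hxmono hxmem hgz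
  have hsplit : iteratedDerivWithin n g (Ioo a b) ξ =
      iteratedDerivWithin n f (Ioo a b) ξ -
        iteratedDerivWithin n (fun t : ℝ => P.eval t) (Ioo a b) ξ :=
    iteratedDerivWithin_sub hξmem hu (hf.contDiffWithinAt hξmem) ((hPsmooth _).contDiffWithinAt hξmem)
  have hpoly : iteratedDerivWithin n (fun t : ℝ => P.eval t) (Ioo a b) ξ =
      (n.factorial : ℝ) * P.coeff n := by
    rw [iteratedDerivWithin_isOpen' hio hξmem, iteratedDeriv_polyeval,
      iterate_derivative_eq_C n P hPnat]
    simp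
  have hfval : iteratedDerivWithin n f (Ioo a b) ξ = (n.factorial : ℝ) * P.coeff n := by
    have := hsplit
    rw [hξ0, hpoly] at this
    linarith
  refine ⟨ξ, ⟨?_, ?_⟩, hξmem, ?_⟩
  · obtain ⟨j, hj⟩ := (hmemS _ (hxS 0)).2
    calc ⨅ i, Λ i ≤ Λ j := ciInf_le (Set.Finite.bddBelow (Set.finite_range Λ)) j
    _ = x 0 := hj
    _ ≤ ξ := hξIcc.1
  · obtain ⟨j, hj⟩ := (hmemS _ (hxS (Fin.last n))).2
    calc ξ ≤ x (Fin.last n) := hξIcc.2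
    _ = Λ j := hj.symm
    _ ≤ ⨆ i, Λ i := le_ciSup (Set.Finite.bddAbove (Set.finite_range Λ)) j
  · rw [hdd, hfval]
    field_simp

end AuxDD


/-- Mean value theorem for divided differences: if `D` is the continuous extension of the
divided difference of a `C^{n-1}` function `f` to all tuples in `(a,b)^n`, then its value
at any tuple is `f^{(n-1)}(ξ)/(n-1)!` for some `ξ` between the smallest and largest point. -/
theorem stmt1 (n : ℕ) (hn : 1 ≤ n) (a b : ℝ) (f : ℝ → ℝ)
    (hf : ContDiffOn ℝ (n - 1 : ℕ) f (Ioo a b))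
    (D : (Fin n → ℝ) → ℝ)
    (hDcont : ContinuousOn D {Λ | ∀ i, Λ i ∈ Ioo a b})
    (hDagree : ∀ Λ : Fin n → ℝ, (∀ i, Λ i ∈ Ioo a b) → Function.Injective Λ →
      D Λ = divDiff f (List.ofFn Λ)) :
    ∀ Λ : Fin n → ℝ, (∀ i, Λ i ∈ Ioo a b) →
      ∃ ξ ∈ Icc (⨅ i, Λ i) (⨆ i, Λ i),
        D Λ = iteratedDerivWithin (n - 1) f (Ioo a b) ξ / (Nat.factorial (n - 1) : ℝ) := by
  obtain ⟨m, rfl⟩ : ∃ m, n = m + 1 := ⟨n - 1, (Nat.succ_pred_eq_of_pos hn).symm⟩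
  simp only [Nat.add_sub_cancel] at hf ⊢
  intro Λ hΛ
  have hio : IsOpen (Ioo a b) := isOpen_Ioo
  have hu : UniqueDiffOn ℝ (Ioo a b) := hio.uniqueDiffOn
  set S : Set (Fin (m+1) → ℝ) := {Λ' | ∀ i, Λ' i ∈ Ioo a b} with hS
  set g : ℝ → ℝ := iteratedDerivWithin m f (Ioo a b) with hg
  have hbddB : BddBelow (Set.range Λ) := (Set.finite_range Λ).bddBelow
  have hbddA : BddAbove (Set.range Λ) := (Set.finite_range Λ).bddAbove
  obtain ⟨imax, himax⟩ : ∃ i, ∀ j, Λ j ≤ Λ i := Finite.exists_max Λ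
  obtain ⟨imin, himin⟩ : ∃ i, ∀ j, Λ i ≤ Λ j := Finite.exists_min Λ
  set M : ℝ := ⨆ i, Λ i with hM
  set L : ℝ := ⨅ i, Λ i with hL
  have hMeq : M = Λ imax := le_antisymm (ciSup_le himax) (le_ciSup hbddA imax)
  have hLeq : L = Λ imin := le_antisymm (ciInf_le hbddB imin) (le_ciInf himin)
  have hMb : M < b := hMeq ▸ (hΛ imax).2
  have haL : a < L := hLeq ▸ (hΛ imin).1
  -- bad set of perturbations
  set T : Finset ℝ := Finset.image
    (fun p : Fin (m+1) × Fin (m+1) => (Λ p.2 - Λ p.1) / ((p.1.val : ℝ) - (p.2.val : ℝ)))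
    Finset.univ with hT
  have hinj_of : ∀ ε : ℝ, ε ∉ (T : Set ℝ) →
      Function.Injective (fun i : Fin (m+1) => Λ i + ε * (i.val : ℝ)) := by
    intro ε hε i j hij
    by_contra hne
    apply hε
    simp only [Pi.add_apply] at hij
    have hval : (i.val : ℝ) ≠ (j.val : ℝ) := by
      exact_mod_cast fun h => hne (Fin.ext (by exact_mod_cast h))
    have : ε = (Λ j - Λ i) / ((i.val : ℝ) - (j.val : ℝ)) := by
      field_simp [sub_ne_zero.mpr hval]
      linarith
    rw [this]
    simp only [hT, Finset.coe_image, Set.mem_image]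
    exact ⟨(i, j), by simp⟩
  -- choose the perturbation sizes
  have hδpos : ∀ k : ℕ, 0 < min (1 / (k + 1 : ℝ)) ((b - M) / (m + 1)) := by
    intro k
    apply lt_min
    · positivity
    · apply div_pos (by linarith) (by positivity)
  have hchoice : ∀ k : ℕ, ∃ ε : ℝ,
      (ε ∈ Ioo 0 (min (1 / (k + 1 : ℝ)) ((b - M) / (m + 1)))) ∧ ε ∉ (T : Set ℝ) := by
    intro k
    have hinf : (Ioo (0:ℝ) (min (1 / (k + 1 : ℝ)) ((b - M) / (m + 1)))).Infinite :=
      Set.infinite_coe_iff.mp (Set.Ioo.infinite (hδpos k))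
    obtain ⟨ε, hε⟩ := (hinf.diff T.finite_toSet).nonempty
    exact ⟨ε, hε.1, hε.2⟩
  choose ε hεIoo hεT using hchoice
  have hεpos : ∀ k, 0 < ε k := fun k => (hεIoo k).1
  have hεlt : ∀ k, ε k < 1 / (k + 1 : ℝ) := fun k => lt_of_lt_of_le (hεIoo k).2 (min_le_left _ _)
  have hεlt' : ∀ k, ε k * (m + 1) < b - M := by
    intro k
    have h1 : ε k < (b - M) / (m + 1) := lt_of_lt_of_le (hεIoo k).2 (min_le_right _ _)
    have h2 : (0:ℝ) < m + 1 := by positivity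
    calc ε k * (m + 1) < ((b - M) / (m + 1)) * (m + 1) := by
          exact mul_lt_mul_of_pos_right h1 h2
    _ = b - M := by field_simp
  set Λs : ℕ → Fin (m+1) → ℝ := fun k i => Λ i + ε k * (i.val : ℝ) with hΛs
  have hΛsmem : ∀ k i, Λs k i ∈ Ioo a b := by
    intro k i
    constructor
    · have : (0:ℝ) ≤ ε k * (i.val : ℝ) := mul_nonneg (hεpos k).le (by positivity)
      have := (hΛ i).1
      simp only [hΛs]
      linarith
    · have h1 : ε k * (i.val : ℝ) ≤ ε k * (m : ℝ) := by
        apply mul_le_mul_of_nonneg_left _ (hεpos k).le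
        exact_mod_cast Nat.lt_succ_iff.mp i.isLt
      have h2 : ε k * (m : ℝ) < ε k * (m + 1) := by
        apply mul_lt_mul_of_pos_left _ (hεpos k)
        linarith
      have h3 := hεlt' k
      have h4 : Λ i ≤ M := hMeq ▸ himax i
      simp only [hΛs]
      linarith
  have hΛsinj : ∀ k, Function.Injective (Λs k) := fun k => hinj_of (ε k) (hεT k)
  -- apply the distinct-point MVT
  have hmvt : ∀ k : ℕ, ∃ ξ ∈ Icc (⨅ i, Λs k i) (⨆ i, Λs k i), ξ ∈ Ioo a b ∧
      D (Λs k) = g ξ / (m.factorial : ℝ) := by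
    intro k
    obtain ⟨ξ, hξIcc, hξmem, hξeq⟩ := divDiff_mvt m a b f hf (Λs k) (hΛsmem k) (hΛsinj k)
    exact ⟨ξ, hξIcc, hξmem, by rw [hDagree (Λs k) (hΛsmem k) (hΛsinj k), hξeq]⟩
  choose ξ hξIcc hξmem hξeq using hmvt
  -- bounds on ξ k
  have hξlow : ∀ k, L ≤ ξ k := by
    intro k
    refine le_trans ?_ (hξIcc k).1
    apply le_ciInf
    intro i
    have : (0:ℝ) ≤ ε k * (i.val : ℝ) := mul_nonneg (hεpos k).le (by positivity)
    have h2 : L ≤ Λ i := hL ▸ ciInf_le hbddB i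
    simp only [hΛs]
    linarith
  have hξhigh : ∀ k, ξ k ≤ M + ε k * (m + 1) := by
    intro k
    refine le_trans (hξIcc k).2 ?_
    apply ciSup_le
    intro i
    have h1 : ε k * (i.val : ℝ) ≤ ε k * (m + 1) := by
      apply mul_le_mul_of_nonneg_left _ (hεpos k).le
      have h5 : (i.val : ℝ) ≤ (m : ℝ) := by exact_mod_cast Nat.lt_succ_iff.mp i.isLt
      linarith
    have h4 : Λ i ≤ M := hMeq ▸ himax i
    simp only [hΛs]
    linarith
  have hξK : ∀ k, ξ k ∈ Icc L b := by
    intro k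
    refine ⟨hξlow k, ?_⟩
    have := hξhigh k
    have := hεlt' k
    linarith
  -- extract a convergent subsequence
  obtain ⟨xiL, hxiLK, φ, hφmono, hφconv⟩ :=
    (isCompact_Icc (a := L) (b := b)).tendsto_subseq hξK
  have hφtop : Filter.Tendsto φ Filter.atTop Filter.atTop := hφmono.tendsto_atTop
  have hε0 : Filter.Tendsto ε Filter.atTop (nhds 0) := by
    apply squeeze_zero (fun k => (hεpos k).le) (fun k => (hεlt k).le)
    exact tendsto_one_div_add_atTop_nhds_zero_nat
  have hεφ0 : Filter.Tendsto (fun k => ε (φ k)) Filter.atTop (nhds 0) := hε0.comp hφtop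
  have hxiLM : xiL ≤ M := by
    refine le_of_tendsto_of_tendsto' hφconv ?_ (fun k => hξhigh (φ k))
    have : Filter.Tendsto (fun k => M + ε (φ k) * (m + 1 : ℝ)) Filter.atTop
        (nhds (M + 0 * (m + 1 : ℝ))) := by
      exact Filter.Tendsto.add tendsto_const_nhds (hεφ0.mul tendsto_const_nhds)
    simpa using this
  have hxiLmem : xiL ∈ Ioo a b :=
    Icc_subset_Ioo haL hMb ⟨hxiLK.1, hxiLM⟩
  -- convergence of the tuples
  have hΛconv : Filter.Tendsto (fun k => Λs (φ k)) Filter.atTop (nhds Λ) := by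
    rw [tendsto_pi_nhds]
    intro i
    have : Filter.Tendsto (fun k => Λ i + ε (φ k) * (i.val : ℝ)) Filter.atTop
        (nhds (Λ i + 0 * (i.val : ℝ))) :=
      Filter.Tendsto.add tendsto_const_nhds (hεφ0.mul tendsto_const_nhds)
    simpa [hΛs] using this
  have hDconv : Filter.Tendsto (fun k => D (Λs (φ k))) Filter.atTop (nhds (D Λ)) := by
    have hcw : ContinuousWithinAt D S Λ := hDcont Λ hΛ
    apply hcw.tendsto.comp
    rw [tendsto_nhdsWithin_iff]
    exact ⟨hΛconv, Filter.Eventually.of_forall fun k => hΛsmem (φ k)⟩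
  have hgcont : ContinuousOn g (Ioo a b) := by
    apply hf.continuousOn_iteratedDerivWithin _ hu
    exact_mod_cast le_refl _
  have hgconv : Filter.Tendsto (fun k => g (ξ (φ k))) Filter.atTop (nhds (g xiL)) := by
    have hca : ContinuousAt g xiL := hgcont.continuousAt (hio.mem_nhds hxiLmem)
    exact hca.tendsto.comp hφconv
  have hfinal : D Λ = g xiL / (m.factorial : ℝ) := by
    apply tendsto_nhds_unique hDconv
    have : (fun k => D (Λs (φ k))) = fun k => g (ξ (φ k)) / (m.factorial : ℝ) := by
      funext k; exact hξeq (φ k)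
    rw [this]
    exact hgconv.div_const _
  exact ⟨xiL, ⟨hxiLK.1, hxiLM⟩, hfinal⟩
end

section
/- Let λ₁, ..., λₙ be distinct reals. Define I_i(t) = Res_{z=λᵢ} S(z,t) where S(z,t) = −(z−t)^{2n−2}/p_Λ(z)² and p_Λ(z) = ∏(z−λᵢ). Then each I_i is a polynomial in t satisfying I_i(λᵢ) = 0, and I(t) = Σ_{i : λᵢ < t} I_i(t) is a continuous function supported on [min λᵢ, max λᵢ]. -/
open Finset Set

section ResidueAux

open Finset Polynomial

noncomputable def Qp (n : ℕ) (lam : Fin n → ℝ) (i : Fin n) : Polynomial ℝ :=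
  ∏ k ∈ univ.erase i, (X - C (lam k))^2

noncomputable def Np (n : ℕ) (t : ℝ) : Polynomial ℝ := -(X - C t)^(2*n-2)

noncomputable def Bv (n : ℕ) (lam : Fin n → ℝ) (i : Fin n) (t : ℝ) : ℝ :=
  ((derivative (Np n t)).eval (lam i) * (Qp n lam i).eval (lam i) -
    (Np n t).eval (lam i) * (derivative (Qp n lam i)).eval (lam i)) /
  ((Qp n lam i).eval (lam i))^2

lemma Qp_eval_ne (n : ℕ) (lam : Fin n → ℝ) (hdist : Function.Injective lam) (i : Fin n) :
    (Qp n lam i).eval (lam i) ≠ 0 := by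
  rw [Qp, eval_prod]
  rw [Finset.prod_ne_zero_iff]
  intro k hk
  simp only [eval_pow, eval_sub, eval_X, eval_C]
  have h : lam i - lam k ≠ 0 :=
    sub_ne_zero.mpr (fun h => (Finset.mem_erase.mp hk).1 (hdist h).symm)
  exact pow_ne_zero _ h

lemma Qp_monic (n : ℕ) (lam : Fin n → ℝ) (i : Fin n) : (Qp n lam i).Monic :=
  monic_prod_of_monic _ _ fun k _ => (monic_X_sub_C _).pow 2

lemma Qp_natDegree (n : ℕ) (lam : Fin n → ℝ) (i : Fin n) :
    (Qp n lam i).natDegree = 2*n - 2 := by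
  rw [Qp, natDegree_prod]
  · simp only [natDegree_pow, natDegree_X_sub_C, mul_one]
    rw [Finset.sum_const, Finset.card_erase_of_mem (Finset.mem_univ i), Finset.card_univ,
      Fintype.card_fin, smul_eq_mul]
    omega
  · intro k _
    exact pow_ne_zero _ (X_sub_C_ne_zero _)

lemma Qp_eval_zero (n : ℕ) (lam : Fin n → ℝ) {i j : Fin n} (hij : i ≠ j) :
    (Qp n lam j).eval (lam i) = 0 := by
  rw [Qp, eval_prod]
  apply Finset.prod_eq_zero (Finset.mem_erase.mpr ⟨hij, Finset.mem_univ i⟩)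
  simp

lemma Qp_deriv_eval_zero (n : ℕ) (lam : Fin n → ℝ) {i j : Fin n} (hij : i ≠ j) :
    (derivative (Qp n lam j)).eval (lam i) = 0 := by
  have hmem : i ∈ univ.erase j := Finset.mem_erase.mpr ⟨hij, Finset.mem_univ i⟩
  have hQ : Qp n lam j = (X - C (lam i))^2 * ∏ k ∈ (univ.erase j).erase i, (X - C (lam k))^2 :=
    (Finset.mul_prod_erase _ _ hmem).symm
  rw [hQ, derivative_mul, eval_add, eval_mul, eval_mul]
  have h1 : (derivative ((X - C (lam i))^2)).eval (lam i) = 0 := by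
    rw [derivative_pow]
    simp
  have h2 : (((X : Polynomial ℝ) - C (lam i))^2).eval (lam i) = 0 := by simp
  rw [h1, h2]; ring

lemma sq_dvd_of_double_root' (p : Polynomial ℝ) (a : ℝ)
    (h0 : p.eval a = 0) (h1 : p.derivative.eval a = 0) : (X - C a)^2 ∣ p := by
  obtain ⟨F, hF⟩ := (dvd_iff_isRoot.mpr h0)
  have hd : p.derivative = F + (X - C a) * F.derivative := by
    rw [hF, derivative_mul]; simp
  have hFa : F.eval a = 0 := by
    have := h1; rw [hd] at this; simpa using this
  obtain ⟨G, hG⟩ := (dvd_iff_isRoot.mpr hFa)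
  exact ⟨G, by rw [hF, hG]; ring⟩

lemma hermite_vanish (n : ℕ) (lam : Fin n → ℝ) (hdist : Function.Injective lam)
    (E : Polynomial ℝ) (hdeg : E.degree < 2*n)
    (h0 : ∀ i, E.eval (lam i) = 0) (h1 : ∀ i, E.derivative.eval (lam i) = 0) : E = 0 := by
  have hdvd : (∏ i : Fin n, (X - C (lam i))^2) ∣ E := by
    apply Finset.prod_dvd_of_coprime
    · intro i _ j _ hij
      exact (Polynomial.pairwise_coprime_X_sub_C hdist hij).pow
    · intro i _
      exact sq_dvd_of_double_root' E (lam i) (h0 i) (h1 i)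
  have hdegprod : (∏ i : Fin n, ((X : Polynomial ℝ) - C (lam i))^2).degree = 2*n := by
    rw [Polynomial.degree_prod]
    simp [Polynomial.degree_pow, Polynomial.degree_X_sub_C, mul_comm]
  exact Polynomial.eq_zero_of_dvd_of_degree_lt hdvd (by rw [hdegprod]; exact_mod_cast hdeg)

lemma Np_identity (n : ℕ) (hn : 2 ≤ n) (lam : Fin n → ℝ) (hdist : Function.Injective lam)
    (t : ℝ) :
    Np n t = ∑ i, (C ((Np n t).eval (lam i) / (Qp n lam i).eval (lam i))
        + C (Bv n lam i t) * (X - C (lam i))) * Qp n lam i := by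
  set A : Fin n → ℝ := fun i => (Np n t).eval (lam i) / (Qp n lam i).eval (lam i) with hA
  set D : Polynomial ℝ :=
    ∑ i, (C (A i) + C (Bv n lam i t) * (X - C (lam i))) * Qp n lam i with hD
  have key : Np n t - D = 0 := by
    apply hermite_vanish n lam hdist
    · -- degree bound
      have h1 : (Np n t).natDegree ≤ 2*n - 1 := by
        rw [Np, natDegree_neg, natDegree_pow, natDegree_X_sub_C]; omega
      have h2 : D.natDegree ≤ 2*n - 1 := by
        apply Polynomial.natDegree_sum_le_of_forall_le
        intro i _
        apply le_trans (natDegree_mul_le)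
        have hq := Qp_natDegree n lam i
        have : (C (A i) + C (Bv n lam i t) * (X - C (lam i))).natDegree ≤ 1 := by
          apply le_trans (natDegree_add_le _ _)
          simp only [natDegree_C, max_le_iff]
          refine ⟨Nat.zero_le _, le_trans natDegree_mul_le ?_⟩
          simp [natDegree_X_sub_C]
        omega
      have h3 : (Np n t - D).natDegree ≤ 2*n - 1 := le_trans (natDegree_sub_le _ _) (by omega)
      calc (Np n t - D).degree ≤ ((2*n-1 : ℕ) : WithBot ℕ) := degree_le_of_natDegree_le h3
        _ < ((2*n : ℕ) : WithBot ℕ) := by exact_mod_cast (by omega : 2*n-1 < 2*n)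
    · intro i
      have hq := Qp_eval_ne n lam hdist i
      rw [eval_sub, hD, eval_finset_sum]
      rw [Finset.sum_eq_single i]
      · simp only [eval_mul, eval_add, eval_C, eval_sub, eval_X, sub_self, mul_zero, add_zero]
        rw [hA]
        field_simp
        ring
      · intro j _ hji
        rw [eval_mul, Qp_eval_zero n lam (Ne.symm hji), mul_zero]
      · exact fun h => absurd (Finset.mem_univ i) h
    · intro i
      have hq := Qp_eval_ne n lam hdist i
      rw [derivative_sub, eval_sub, hD, derivative_sum, eval_finset_sum]
      rw [Finset.sum_eq_single i]
      · rw [derivative_mul, eval_add, eval_mul, eval_mul]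
        have hder : derivative (C (A i) + C (Bv n lam i t) * (X - C (lam i)))
            = C (Bv n lam i t) := by
          simp [derivative_mul]
        rw [hder]
        simp only [eval_add, eval_mul, eval_C, eval_sub, eval_X, sub_self, mul_zero, add_zero]
        rw [hA, Bv]
        field_simp
        ring
      · intro j _ hji
        rw [derivative_mul, eval_add, eval_mul, eval_mul,
          Qp_eval_zero n lam (Ne.symm hji), Qp_deriv_eval_zero n lam (Ne.symm hji)]
        ring
      · exact fun h => absurd (Finset.mem_univ i) h
  have := sub_eq_zero.mp key
  exact this

lemma sum_Bv (n : ℕ) (hn : 2 ≤ n) (lam : Fin n → ℝ) (hdist : Function.Injective lam) (t : ℝ) :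
    ∑ i, Bv n lam i t = 0 := by
  have hid := Np_identity n hn lam hdist t
  have hcoeff := congrArg (fun p => Polynomial.coeff p (2*n-1)) hid
  simp only [finset_sum_coeff] at hcoeff
  have hlhs : (Np n t).coeff (2*n-1) = 0 := by
    apply coeff_eq_zero_of_natDegree_lt
    rw [Np, natDegree_neg, natDegree_pow, natDegree_X_sub_C]
    omega
  have hterm : ∀ i : Fin n,
      ((C ((Np n t).eval (lam i) / (Qp n lam i).eval (lam i))
        + C (Bv n lam i t) * (X - C (lam i))) * Qp n lam i).coeff (2*n-1) = Bv n lam i t := by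
    intro i
    have hexp : (C ((Np n t).eval (lam i) / (Qp n lam i).eval (lam i))
        + C (Bv n lam i t) * (X - C (lam i))) * Qp n lam i
        = C ((Np n t).eval (lam i) / (Qp n lam i).eval (lam i)) * Qp n lam i
          + C (Bv n lam i t) * ((X - C (lam i)) * Qp n lam i) := by ring
    rw [hexp, coeff_add, coeff_C_mul, coeff_C_mul]
    have h1 : (Qp n lam i).coeff (2*n-1) = 0 := by
      apply coeff_eq_zero_of_natDegree_lt
      rw [Qp_natDegree]; omega
    have hm : ((X - C (lam i)) * Qp n lam i).Monic :=
      (monic_X_sub_C _).mul (Qp_monic n lam i)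
    have hnd : ((X - C (lam i)) * Qp n lam i).natDegree = 2*n-1 := by
      rw [Monic.natDegree_mul (monic_X_sub_C _) (Qp_monic n lam i),
        natDegree_X_sub_C, Qp_natDegree]
      omega
    have h2 : ((X - C (lam i)) * Qp n lam i).coeff (2*n-1) = 1 := by
      rw [← hnd]; exact hm.coeff_natDegree
    rw [h1, h2]; ring
  rw [hlhs] at hcoeff
  rw [← Finset.sum_congr rfl (fun i _ => hterm i)]
  exact hcoeff.symm
end ResidueAux


/-- Each residue `I_i(t) = Res_{z=λᵢ} (-(z-t)^(2n-2)/p_Λ(z)^2)` — computed at the double pole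
`λᵢ` as the derivative at `λᵢ` of `z ↦ (z-λᵢ)^2 · S(z,t)` — is a polynomial in `t` vanishing
at `λᵢ`, and `I(t) = ∑_{i : λᵢ < t} I_i(t)` is continuous and supported on `[min λᵢ, max λᵢ]`. -/
theorem stmt6 (n : ℕ) (hn : 2 ≤ n) (lam : Fin n → ℝ) (hdist : Function.Injective lam)
    (Ires : Fin n → ℝ → ℝ)
    (hIres : ∀ i t, Ires i t =
      deriv (fun z : ℝ => -(z - t) ^ (2 * n - 2) /
        ∏ k ∈ univ.erase i, (z - lam k) ^ 2) (lam i))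
    (I : ℝ → ℝ)
    (hI : ∀ t, I t = ∑ i ∈ univ.filter (fun i => lam i < t), Ires i t) :
    (∀ i, (∃ P : Polynomial ℝ, ∀ t, Ires i t = P.eval t) ∧ Ires i (lam i) = 0) ∧
      Continuous I ∧
      (∀ t, t ∉ Icc (⨅ i, lam i) (⨆ i, lam i) → I t = 0) := by
  classical
  -- Ires equals Bv
  have hIB : ∀ i t, Ires i t = Bv n lam i t := by
    intro i t
    rw [hIres]
    have hfun : (fun z : ℝ => -(z - t) ^ (2 * n - 2) /
        ∏ k ∈ univ.erase i, (z - lam k) ^ 2)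
        = fun z => (Np n t).eval z / (Qp n lam i).eval z := by
      funext z
      simp [Np, Qp, Polynomial.eval_prod]
    rw [hfun]
    have hq := Qp_eval_ne n lam hdist i
    have hd := (((Np n t).hasDerivAt (lam i)).div ((Qp n lam i).hasDerivAt (lam i)) hq)
    exact hd.deriv
  -- explicit formula for Bv as a polynomial in t
  have hBval : ∀ i t, Bv n lam i t =
      (-( (2*n-2 : ℝ) * (lam i - t)^(2*n-3)) * (Qp n lam i).eval (lam i)
        + (lam i - t)^(2*n-2) * (Polynomial.derivative (Qp n lam i)).eval (lam i))
        / ((Qp n lam i).eval (lam i))^2 := by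
    intro i t
    rw [Bv]
    have h1 : (Polynomial.derivative (Np n t)).eval (lam i)
        = -((2*n-2 : ℝ) * (lam i - t)^(2*n-3)) := by
      have he : 2*n - 2 - 1 = 2*n - 3 := by omega
      rw [Np, Polynomial.derivative_neg, Polynomial.derivative_pow]
      simp only [Polynomial.derivative_sub, Polynomial.derivative_X, Polynomial.derivative_C,
        sub_zero, mul_one, Polynomial.eval_neg, Polynomial.eval_mul, Polynomial.eval_natCast,
        Polynomial.eval_pow, Polynomial.eval_sub, Polynomial.eval_X, Polynomial.eval_C, he]
      rw [Nat.cast_sub (by omega : 2 ≤ 2*n)]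
      push_cast
      ring
    have h2 : (Np n t).eval (lam i) = -(lam i - t)^(2*n-2) := by
      simp [Np]
    rw [h1, h2]
    ring_nf
  have hP : ∀ i, ∃ P : Polynomial ℝ, ∀ t, Ires i t = P.eval t := by
    intro i
    set q := (Qp n lam i).eval (lam i) with hqdef
    set q' := (Polynomial.derivative (Qp n lam i)).eval (lam i) with hq'def
    refine ⟨Polynomial.C (-(2*n-2 : ℝ) * q / q^2) * (Polynomial.C (lam i) - Polynomial.X)^(2*n-3)
      + Polynomial.C (q' / q^2) * (Polynomial.C (lam i) - Polynomial.X)^(2*n-2), fun t => ?_⟩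
    rw [hIB, hBval]
    simp only [Polynomial.eval_add, Polynomial.eval_mul, Polynomial.eval_C, Polynomial.eval_pow,
      Polynomial.eval_sub, Polynomial.eval_X]
    ring
  have hzero : ∀ i, Ires i (lam i) = 0 := by
    intro i
    rw [hIB, hBval]
    rw [sub_self, zero_pow (by omega : 2*n-3 ≠ 0), zero_pow (by omega : 2*n-2 ≠ 0)]
    ring
  refine ⟨fun i => ⟨hP i, hzero i⟩, ?_, ?_⟩
  · -- continuity
    have hIfun : I = fun t => ∑ i : Fin n, if lam i < t then Ires i t else 0 := by
      funext t
      rw [hI, Finset.sum_filter]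
    rw [hIfun]
    apply continuous_finset_sum
    intro i _
    obtain ⟨P, hPeq⟩ := hP i
    have : (fun t => if lam i < t then Ires i t else 0)
        = fun t => if t ≤ lam i then 0 else P.eval t := by
      funext t
      rcases le_or_gt t (lam i) with h | h
      · rw [if_pos h, if_neg (not_lt.mpr h)]
      · rw [if_neg (not_le.mpr h), if_pos h, hPeq]
    rw [this]
    apply Continuous.if_le continuous_const P.continuous continuous_id continuous_const
    intro t ht
    simp only [id_eq] at ht
    rw [← hPeq, ht, hzero]
  · -- support
    intro t ht
    rw [Set.mem_Icc, not_and_or] at ht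
    push_neg at ht
    have hbb : BddBelow (Set.range lam) := (Set.finite_range lam).bddBelow
    have hba : BddAbove (Set.range lam) := (Set.finite_range lam).bddAbove
    rcases ht with ht | ht
    · rw [hI]
      apply Finset.sum_eq_zero
      intro i hi
      have h1 : lam i < t := (Finset.mem_filter.mp hi).2
      have h2 : (⨅ j, lam j) ≤ lam i := ciInf_le hbb i
      linarith
    · have hfilt : univ.filter (fun i => lam i < t) = (univ : Finset (Fin n)) := by
        apply Finset.filter_true_of_mem
        intro i _
        have : lam i ≤ ⨆ j, lam j := le_ciSup hba i
        linarith
      rw [hI, hfilt]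
      calc ∑ i, Ires i t = ∑ i, Bv n lam i t := Finset.sum_congr rfl fun i _ => hIB i t
        _ = 0 := sum_Bv n hn lam hdist t
end

section
/- Let λ₁, ..., λₙ be distinct reals, p_Λ(z) = ∏(z−λᵢ), I_i(t) = Res_{w=λᵢ}(−(w−t)^{2n−2}/p_Λ(w)²), and I(t) = Σ_{i : λᵢ < t} I_i(t). Then for every z ∈ ℂ outside the interval [min λᵢ, max λᵢ], (2n−1) ∫_{−∞}^{∞} I(t)/(z−t)^{2n} dt = 1/p_Λ(z)². -/
open Finset Set

section Aux
open Polynomial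

lemma sq_dvd_of_eval_deriv (q : Polynomial ℝ) (x : ℝ) (h0 : q.eval x = 0)
    (h1 : q.derivative.eval x = 0) : (X - C x)^2 ∣ q := by
  obtain ⟨r, hr⟩ := (dvd_iff_isRoot.2 h0)
  have hd : q.derivative = r + (X - C x) * r.derivative := by
    rw [hr]; simp [derivative_mul]
  have hrx : r.eval x = 0 := by
    have := congrArg (Polynomial.eval x) hd
    simpa [h1] using this.symm
  obtain ⟨s, hs⟩ := (dvd_iff_isRoot.2 hrx)
  exact ⟨s, by rw [hr, hs]; ring⟩

lemma hermite_interp (n : ℕ) (hn : 1 ≤ n) (lam : Fin n → ℝ) (hdist : Function.Injective lam)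
    (f : Polynomial ℝ) (hdeg : f.natDegree < 2 * n)
    (a b : Fin n → ℝ)
    (Q : Fin n → Polynomial ℝ)
    (hQ : ∀ i, Q i = ∏ k ∈ univ.erase i, (X - C (lam k))^2)
    (ha : ∀ i, f.eval (lam i) = a i * (Q i).eval (lam i))
    (hb : ∀ i, f.derivative.eval (lam i) =
      b i * (Q i).eval (lam i) + a i * (Q i).derivative.eval (lam i)) :
    f = ∑ i, (C (a i) + C (b i) * (X - C (lam i))) * Q i := by
  set g : Polynomial ℝ := f - ∑ i, (C (a i) + C (b i) * (X - C (lam i))) * Q i with hg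
  -- cross vanishing
  have hQval : ∀ i j, i ≠ j → (Q i).eval (lam j) = 0 := by
    intro i j hij
    rw [hQ i, eval_prod]
    exact Finset.prod_eq_zero (Finset.mem_erase.2 ⟨fun h => hij h.symm, Finset.mem_univ j⟩) (by simp)
  have hQder : ∀ i j, i ≠ j → (Q i).derivative.eval (lam j) = 0 := by
    intro i j hij
    have hdvd : (X - C (lam j))^2 ∣ Q i := by
      rw [hQ i]
      exact Finset.dvd_prod_of_mem _ (Finset.mem_erase.2 ⟨fun h => hij h.symm, Finset.mem_univ j⟩)
    obtain ⟨h, hh⟩ := hdvd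
    rw [hh]
    simp [derivative_mul, derivative_pow]
  have hgev : ∀ j, g.eval (lam j) = 0 := by
    intro j
    rw [hg, eval_sub, eval_finset_sum]
    rw [Finset.sum_eq_single j]
    · simp [ha j]
    · intro i _ hij
      simp [hQval i j hij]
    · simp
  have hgder : ∀ j, g.derivative.eval (lam j) = 0 := by
    intro j
    rw [hg, derivative_sub, derivative_sum, eval_sub, eval_finset_sum]
    have hterm : ∀ i, (derivative ((C (a i) + C (b i) * (X - C (lam i))) * Q i)).eval (lam j)
        = if i = j then b j * (Q j).eval (lam j) + a j * (Q j).derivative.eval (lam j) else 0 := by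
      intro i
      rw [derivative_mul]
      by_cases hij : i = j
      · subst hij
        simp [derivative_mul]
      · rw [if_neg hij]
        simp [hQval i j hij, hQder i j hij]
    rw [Finset.sum_congr rfl (fun i _ => hterm i)]
    simp [hb j]
  have hdvd : (∏ j, (X - C (lam j))^2) ∣ g := by
    apply Finset.prod_dvd_of_coprime
    · intro i _ j _ hij
      exact (IsCoprime.pow ((Polynomial.pairwise_coprime_X_sub_C hdist) hij))
    · intro j _
      exact sq_dvd_of_eval_deriv g (lam j) (hgev j) (hgder j)
  have hgdeg : g.natDegree < 2 * n := by
    rw [hg]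
    apply lt_of_le_of_lt (Polynomial.natDegree_sub_le _ _)
    rw [max_lt_iff]
    refine ⟨hdeg, ?_⟩
    apply lt_of_le_of_lt (Polynomial.natDegree_sum_le _ _)
    apply Finset.sup_lt_iff (by positivity) |>.2
    intro i _
    simp only [Function.comp]
    apply lt_of_le_of_lt (Polynomial.natDegree_mul_le)
    have h1 : (C (a i) + C (b i) * (X - C (lam i))).natDegree ≤ 1 := by
      apply le_trans (Polynomial.natDegree_add_le _ _)
      simp only [Polynomial.natDegree_C, max_le_iff]
      constructor
      · omega
      · apply le_trans (Polynomial.natDegree_mul_le)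
        simp [Polynomial.natDegree_X_sub_C]
    have h2 : (Q i).natDegree ≤ 2 * (n - 1) := by
      rw [hQ i]
      apply le_trans (Polynomial.natDegree_prod_le _ _)
      apply le_trans (Finset.sum_le_card_nsmul _ _ 2 ?_)
      · simp [Finset.card_erase_of_mem, mul_comm]
      · intro k _
        apply le_trans (Polynomial.natDegree_pow_le)
        simp [Polynomial.natDegree_X_sub_C]
    omega
  have hPdeg : (∏ j, (X - C (lam j))^2 : Polynomial ℝ).natDegree = 2 * n := by
    rw [Polynomial.natDegree_prod]
    · simp [Polynomial.natDegree_X_sub_C, Polynomial.natDegree_pow]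
      ring
    · intro j _
      apply pow_ne_zero
      exact Polynomial.X_sub_C_ne_zero _
  have hg0 : g = 0 := by
    by_contra hne
    have := Polynomial.natDegree_le_of_dvd hdvd hne
    omega
  exact sub_eq_zero.1 hg0

end Aux

section Aux2
open Filter

lemma norm_tendsto_atTop (z : ℂ) : Tendsto (fun t : ℝ => ‖z - (t : ℂ)‖) atTop atTop := by
  have hb : ∀ᶠ t : ℝ in atTop, t - ‖z‖ ≤ ‖z - (t:ℂ)‖ := by
    filter_upwards [eventually_ge_atTop (0:ℝ)] with t ht
    calc t - ‖z‖ ≤ ‖(t:ℂ)‖ - ‖z‖ := by simp [Complex.norm_real, abs_of_nonneg ht]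
    _ ≤ ‖(t:ℂ) - z‖ := norm_sub_norm_le _ _
    _ = ‖z - (t:ℂ)‖ := norm_sub_rev _ _
  exact tendsto_atTop_mono' _ hb (tendsto_atTop_add_const_right _ _ tendsto_id)

lemma norm_tendsto_atBot (z : ℂ) : Tendsto (fun t : ℝ => ‖z - (t : ℂ)‖) atBot atTop := by
  have hb : ∀ᶠ t : ℝ in atBot, -t - ‖z‖ ≤ ‖z - (t:ℂ)‖ := by
    filter_upwards [eventually_le_atBot (0:ℝ)] with t ht
    calc -t - ‖z‖ ≤ ‖(t:ℂ)‖ - ‖z‖ := by simp [Complex.norm_real, abs_of_nonpos ht]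
    _ ≤ ‖(t:ℂ) - z‖ := norm_sub_norm_le _ _
    _ = ‖z - (t:ℂ)‖ := norm_sub_rev _ _
  exact tendsto_atTop_mono' _ hb
    (tendsto_atTop_add_const_right _ _ tendsto_neg_atBot_atTop)

lemma inv_pow_tendsto (z : ℂ) (p : ℕ) (hp : 1 ≤ p) (l : Filter ℝ)
    (hl : Tendsto (fun t : ℝ => ‖z - (t : ℂ)‖) l atTop) :
    Tendsto (fun t : ℝ => (((z - (t:ℂ)) ^ p)⁻¹)) l (nhds 0) := by
  rw [tendsto_zero_iff_norm_tendsto_zero]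
  have : (fun t : ℝ => ‖((z - (t:ℂ))^p)⁻¹‖) = fun t : ℝ => (‖z - (t:ℂ)‖^p)⁻¹ := by
    funext t; simp
  rw [this]
  apply Tendsto.inv_tendsto_atTop
  exact (tendsto_pow_atTop (by omega : p ≠ 0)).comp hl

lemma hasDerivAt_zsub (z : ℂ) (t : ℝ) : HasDerivAt (fun s : ℝ => z - (s:ℂ)) (-1) t := by
  have h : HasDerivAt (fun s : ℝ => (s:ℂ)) 1 t := by
    exact (hasDerivAt_id t).ofReal_comp
  simpa using h.const_sub z

lemma gam_rec (m k : ℕ) :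
    ((m.factorial : ℂ) * (k.factorial)) / ((m+k+1).factorial)
      - ((m.factorial : ℂ) * ((k+1).factorial)) / ((m+k+2).factorial)
      = (((m+1).factorial : ℂ) * (k.factorial)) / ((m+k+2).factorial) := by
  have h1 : ((m+k+2).factorial : ℂ) = (m+k+2) * (m+k+1).factorial := by
    rw [show m+k+2 = (m+k+1)+1 by ring, Nat.factorial_succ]; push_cast; ring
  have h2 : (((k+1)).factorial : ℂ) = (k+1) * k.factorial := by
    rw [Nat.factorial_succ]; push_cast; ring
  have h3 : (((m+1)).factorial : ℂ) = (m+1) * m.factorial := by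
    rw [Nat.factorial_succ]; push_cast; ring
  have hne1 : ((m+k+1).factorial : ℂ) ≠ 0 :=
    Nat.cast_ne_zero.2 (Nat.factorial_ne_zero _)
  have hne2 : (((m:ℂ)+k+2)) ≠ 0 := by
    have : (((m+k+2 : ℕ)):ℂ) ≠ 0 := Nat.cast_ne_zero.2 (by omega)
    push_cast at this
    exact this
  have hprod : (((m:ℂ)+k+2)) * ((m+k+1).factorial : ℂ) ≠ 0 := mul_ne_zero hne2 hne1
  rw [h1, h2, h3, div_sub_div _ _ hne1 hprod,
    div_eq_div_iff (mul_ne_zero hne1 hprod) hprod]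
  ring

lemma psi (z : ℂ) (a : ℝ) (hza : z ≠ (a:ℂ)) :
    ∀ m e : ℕ, m + 2 ≤ e →
    ∃ Φ : ℝ → ℂ,
      (∀ t : ℝ, z ≠ (t:ℂ) → HasDerivAt Φ ((((a:ℂ) - t)^m) * (((z - t)^e)⁻¹)) t) ∧
      Tendsto Φ atTop (nhds 0) ∧ Tendsto Φ atBot (nhds 0) ∧
      Φ a = ((m.factorial : ℂ) * ((e - m - 2).factorial)) / ((e-1).factorial)
              * ((z - (a:ℂ))^(e - m - 1))⁻¹ := by
  intro m
  induction m with
  | zero =>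
    intro e he
    obtain ⟨k, rfl⟩ : ∃ k, e = k + 2 := ⟨e - 2, by omega⟩
    have hk1 : ((k:ℂ)+1) ≠ 0 := Nat.cast_add_one_ne_zero k
    refine ⟨fun t => (((k:ℂ)+1))⁻¹ * (((z - t)^(k+1))⁻¹), ?_, ?_, ?_, ?_⟩
    · intro t hzt
      have hw : (z - (t:ℂ)) ≠ 0 := sub_ne_zero.2 hzt
      have h1 : HasDerivAt (fun s : ℝ => (z - (s:ℂ))^(k+1))
          (((k:ℂ)+1) * (z - t)^k * (-1)) t := by
        have hc : HasDerivAt (fun w : ℂ => (z - w)^(k+1))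
            (((k:ℂ)+1) * (z - t)^k * (-1)) (t:ℂ) := by
          have := ((hasDerivAt_id (t:ℂ)).const_sub z).pow (k+1)
          simp at this ⊢; exact this
        exact hc.comp_ofReal
      have hc2 : HasDerivAt (fun w : ℂ => ((z - w)^(k+1))⁻¹)
          (-(((k:ℂ)+1) * (z - t)^k * (-1)) / ((z - t)^(k+1))^2) (t:ℂ) := by
        have hc : HasDerivAt (fun w : ℂ => (z - w)^(k+1))
            (((k:ℂ)+1) * (z - t)^k * (-1)) (t:ℂ) := by
          have := ((hasDerivAt_id (t:ℂ)).const_sub z).pow (k+1)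
          simp at this ⊢; exact this
        exact hc.inv (pow_ne_zero _ hw)
      have h3 := (hc2.comp_ofReal).const_mul ((((k:ℂ))+1))⁻¹
      convert h3 using 1
      case e'_4 => rfl
      have hpow : ((z-(t:ℂ))^(k+1))^2 = (z-t)^k * (z-t)^(k+2) := by
        rw [← pow_mul, ← pow_add]; congr 1; omega
      rw [hpow]
      field_simp
    · have := (inv_pow_tendsto z (k+1) (by omega) atTop (norm_tendsto_atTop z)).const_mul
        ((((k:ℂ))+1))⁻¹
      simpa using this
    · have := (inv_pow_tendsto z (k+1) (by omega) atBot (norm_tendsto_atBot z)).const_mul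
        ((((k:ℂ))+1))⁻¹
      simpa using this
    · have e1 : k+2-0-2 = k := by omega
      have e2 : k+2-1 = k+1 := by omega
      have e3 : k+2-0-1 = k+1 := by omega
      rw [e1, e2, e3, Nat.factorial_zero, Nat.factorial_succ]
      have hfk : ((k.factorial : ℂ)) ≠ 0 := Nat.cast_ne_zero.2 (Nat.factorial_ne_zero _)
      have hwa : (z - (a:ℂ)) ≠ 0 := sub_ne_zero.2 hza
      push_cast
      field_simp
  | succ m ih =>
    intro e he
    obtain ⟨k, rfl⟩ : ∃ k, e = m + k + 3 := ⟨e - m - 3, by omega⟩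
    obtain ⟨Φ₁, hd1, ht1, hb1, hv1⟩ := ih (m+k+2) (by omega)
    obtain ⟨Φ₂, hd2, ht2, hb2, hv2⟩ := ih (m+k+3) (by omega)
    have hwa : (z - (a:ℂ)) ≠ 0 := sub_ne_zero.2 hza
    refine ⟨fun t => Φ₁ t - (z - a) * Φ₂ t, ?_, ?_, ?_, ?_⟩
    · intro t hzt
      have hw : (z - (t:ℂ)) ≠ 0 := sub_ne_zero.2 hzt
      have h := (hd1 t hzt).fun_sub ((hd2 t hzt).const_mul (z - (a:ℂ)))
      convert h using 1
      case e'_4 => rfl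
      have hsplit : (z - (t:ℂ))^(m+k+3) = (z-t) * (z-t)^(m+k+2) := by
        rw [show m+k+3 = (m+k+2)+1 by ring, pow_succ']
      rw [hsplit, pow_succ]
      field_simp
      ring
    · have := ht1.sub (ht2.const_mul (z - (a:ℂ)))
      simpa using this
    · have := hb1.sub (hb2.const_mul (z - (a:ℂ)))
      simpa using this
    · have e1 : m+k+2-m-2 = k := by omega
      have e2 : m+k+2-1 = m+k+1 := by omega
      have e3 : m+k+2-m-1 = k+1 := by omega
      have e4 : m+k+3-m-2 = k+1 := by omega
      have e5 : m+k+3-1 = m+k+2 := by omega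
      have e6 : m+k+3-m-1 = k+2 := by omega
      have e7 : m+k+3-(m+1)-2 = k := by omega
      have e8 : m+k+3-(m+1)-1 = k+1 := by omega
      have hΦa : (fun t => Φ₁ t - (z - (a:ℂ)) * Φ₂ t) a = Φ₁ a - (z-(a:ℂ))*Φ₂ a := rfl
      rw [hΦa, hv1, hv2, e1, e2, e3, e4, e5, e6, e7, e8]
      have hcancel : (z - (a:ℂ)) * ((z - (a:ℂ))^(k+2))⁻¹ = ((z - (a:ℂ))^(k+1))⁻¹ := by
        rw [show k+2 = (k+1)+1 by ring, pow_succ']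
        field_simp
      have hgr := gam_rec m k
      linear_combination (((z - (a:ℂ))^(k+1))⁻¹) * hgr
        - ((m.factorial:ℂ) * ((k+1).factorial)/((m+k+2).factorial)) * hcancel

end Aux2

/-- Integral identity for the weight `I`: for `z` outside `[min λᵢ, max λᵢ]`,
`(2n-1) ∫ I(t)/(z-t)^(2n) dt = 1/p_Λ(z)^2`. -/
theorem stmt7 (n : ℕ) (hn : 2 ≤ n) (lam : Fin n → ℝ) (hdist : Function.Injective lam)
    (Ires : Fin n → ℝ → ℝ)
    (hIres : ∀ i t, Ires i t =
      deriv (fun z : ℝ => -(z - t) ^ (2 * n - 2) /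
        ∏ k ∈ univ.erase i, (z - lam k) ^ 2) (lam i))
    (I : ℝ → ℝ)
    (hI : ∀ t, I t = ∑ i ∈ univ.filter (fun i => lam i < t), Ires i t)
    (z : ℂ) (hz : ∀ s ∈ Icc (⨅ i, lam i) (⨆ i, lam i), z ≠ (s : ℂ)) :
    (2 * n - 1 : ℂ) * ∫ t : ℝ, (I t : ℂ) / (z - (t : ℂ)) ^ (2 * n) =
      ((∏ i, (z - (lam i : ℂ))) ^ 2)⁻¹ := by
  classical
  haveI : Nonempty (Fin n) := ⟨⟨0, by omega⟩⟩
  set m0 := ⨅ i, lam i with hm0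
  set M0 := ⨆ i, lam i with hM0
  have hmem : ∀ i, lam i ∈ Icc m0 M0 := fun i =>
    ⟨ciInf_le (Set.Finite.bddBelow (Set.finite_range lam)) i,
     le_ciSup (Set.Finite.bddAbove (Set.finite_range lam)) i⟩
  have hm0M0 : m0 ≤ M0 := le_trans (hmem ⟨0, by omega⟩).1 (hmem ⟨0, by omega⟩).2
  have hzlam : ∀ i, z ≠ (lam i : ℂ) := fun i => hz _ (hmem i)
  -- polynomial setup
  set Q : Fin n → Polynomial ℝ :=
    fun i => ∏ k ∈ univ.erase i, (Polynomial.X - Polynomial.C (lam k))^2 with hQdef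
  set c : Fin n → ℝ := fun i => ∏ k ∈ univ.erase i, (lam i - lam k) with hcdef
  have hc : ∀ i, c i ≠ 0 := by
    intro i
    apply Finset.prod_ne_zero_iff.2
    intro k hk
    exact sub_ne_zero.2 fun h => (Finset.mem_erase.1 hk).1 (hdist h.symm)
  have hQev : ∀ i w, (Q i).eval w = ∏ k ∈ univ.erase i, (w - lam k)^2 := by
    intro i w
    rw [hQdef]
    simp [Polynomial.eval_prod]
  have hQevc : ∀ i, (Q i).eval (lam i) = (c i)^2 := by
    intro i
    rw [hQev, hcdef, ← Finset.prod_pow]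
  set a : Fin n → ℝ := fun i => ((c i)^2)⁻¹ with hadef
  set QD : Fin n → ℝ := fun i => (Q i).derivative.eval (lam i) with hQDdef
  set b : Fin n → ℝ := fun i => -(QD i) / ((c i)^2)^2 with hbdef
  have hac : ∀ i, a i * (c i)^2 = 1 := fun i => inv_mul_cancel₀ (pow_ne_zero 2 (hc i))
  have habq : ∀ i, b i * (c i)^2 + a i * QD i = 0 := by
    intro i
    have hba : b i = -(QD i) * a i * a i := by
      show -QD i / ((c i)^2)^2 = -(QD i) * ((c i)^2)⁻¹ * ((c i)^2)⁻¹
      rw [div_eq_mul_inv, pow_two ((c i)^2), mul_inv]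
      ring
    calc b i * c i^2 + a i * QD i
        = -(QD i) * a i * (a i * c i^2) + a i * QD i := by rw [hba]; ring
      _ = 0 := by rw [hac i]; ring
  have hQinv : ∀ i, HasDerivAt (fun w : ℝ => ((Q i).eval w)⁻¹) (b i) (lam i) := by
    intro i
    have h := ((Q i).hasDerivAt (lam i)).fun_inv (by rw [hQevc]; exact pow_ne_zero 2 (hc i))
    rw [hbdef]
    convert h using 1
    case e'_4 => rfl
    case e'_5 => rfl
    rw [hQevc, hQDdef]
  -- step 1 : explicit formula for Ires
  have key1 : ∀ i t, Ires i t = -((2*n-2 : ℕ) : ℝ) * (lam i - t)^(2*n-3) * a i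
      - (lam i - t)^(2*n-2) * b i := by
    intro i t
    rw [hIres i t]
    have hfun : (fun w : ℝ => -(w - t) ^ (2 * n - 2) / ∏ k ∈ univ.erase i, (w - lam k) ^ 2)
        = fun w => (-(w - t)^(2*n-2)) * (((Q i).eval w))⁻¹ := by
      funext w
      rw [hQev, div_eq_mul_inv]
    rw [hfun]
    have h1 : HasDerivAt (fun w : ℝ => -(w - t)^(2*n-2))
        (-(((2*n-2 : ℕ) : ℝ) * (lam i - t)^(2*n-3))) (lam i) := by
      have := (((hasDerivAt_id (lam i)).sub_const t).fun_pow (2*n-2)).fun_neg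
      simp [show 2*n-2-1 = 2*n-3 by omega] at this ⊢; exact this
    have h := h1.fun_mul (hQinv i)
    rw [h.deriv, hQevc]
    have : ((c i)^2)⁻¹ = a i := rfl
    rw [this]
    ring
  -- polynomial degree facts
  have hQmonic : ∀ i, (Q i).Monic := by
    intro i
    exact Polynomial.monic_prod_of_monic _ _ fun k _ => (Polynomial.monic_X_sub_C _).pow 2
  have hQnd : ∀ i, (Q i).natDegree = 2*n-2 := by
    intro i
    show (∏ k ∈ univ.erase i, (Polynomial.X - Polynomial.C (lam k))^2).natDegree = 2*n-2
    rw [Polynomial.natDegree_prod _ _ (fun k _ => pow_ne_zero 2 (Polynomial.X_sub_C_ne_zero _))]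
    have : ∀ k : Fin n, ((Polynomial.X - Polynomial.C (lam k))^2).natDegree = 2 := by
      intro k
      rw [Polynomial.natDegree_pow, Polynomial.natDegree_X_sub_C]
    rw [Finset.sum_congr rfl (fun k _ => this k), Finset.sum_const,
      Finset.card_erase_of_mem (Finset.mem_univ i), Finset.card_univ, Fintype.card_fin,
      smul_eq_mul]
    omega
  have hQc1 : ∀ i, (Q i).coeff (2*n-1) = 0 := by
    intro i
    apply Polynomial.coeff_eq_zero_of_natDegree_lt
    rw [hQnd]; omega
  have hQc2 : ∀ i, (Q i).coeff (2*n-2) = 1 := by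
    intro i
    have := (hQmonic i).coeff_natDegree
    rwa [hQnd] at this
  -- Hermite identity for f = 1
  have hid1 : (1 : Polynomial ℝ) = ∑ i, (Polynomial.C (a i)
      + Polynomial.C (b i) * (Polynomial.X - Polynomial.C (lam i))) * Q i := by
    apply hermite_interp n (by omega) lam hdist 1 (by rw [Polynomial.natDegree_one]; omega)
      a b Q (fun i => rfl)
    · intro i
      rw [Polynomial.eval_one, hQevc, ← hac i]
    · intro i
      rw [Polynomial.derivative_one, Polynomial.eval_zero, hQevc, ← habq i]
  -- Hermite identity for f_t and sum of residues = 0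
  have hsum0 : ∀ t : ℝ, ∑ i, Ires i t = 0 := by
    intro t
    set f : Polynomial ℝ := -(Polynomial.X - Polynomial.C t)^(2*n-2) with hfdef
    have hfnd : f.natDegree ≤ 2*n-2 := by
      rw [hfdef, Polynomial.natDegree_neg]
      apply le_trans (Polynomial.natDegree_pow_le)
      simp [Polynomial.natDegree_X_sub_C]
    have hfev : ∀ w, f.eval w = -(w - t)^(2*n-2) := by
      intro w; rw [hfdef]; simp
    have hfdev : ∀ w, f.derivative.eval w = -(((2*n-2 : ℕ):ℝ) * (w - t)^(2*n-3)) := by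
      intro w
      rw [hfdef, Polynomial.derivative_neg, Polynomial.derivative_pow]
      simp [show 2*n-2-1 = 2*n-3 by omega]
    have hid := hermite_interp n (by omega) lam hdist f (lt_of_le_of_lt hfnd (by omega))
      (fun i => -(lam i - t)^(2*n-2) * a i) (fun i => Ires i t) Q (fun i => rfl)
      (by
        intro i
        rw [hfev, hQevc, mul_assoc, hac, mul_one])
      (by
        intro i
        beta_reduce
        rw [hfdev, hQevc, key1 i t]
        have h1 := hac i
        have h2 := habq i
        linear_combination (((2*n-2:ℕ):ℝ) * (lam i - t)^(2*n-3)) * h1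
          + (lam i - t)^(2*n-2) * h2)
    have hco := congrArg (fun p => Polynomial.coeff p (2*n-1)) hid
    simp only [Polynomial.finset_sum_coeff] at hco
    have hL : f.coeff (2*n-1) = 0 :=
      Polynomial.coeff_eq_zero_of_natDegree_lt (lt_of_le_of_lt hfnd (by omega))
    have hterm : ∀ i, ((Polynomial.C (-(lam i - t)^(2*n-2) * a i)
        + Polynomial.C (Ires i t) * (Polynomial.X - Polynomial.C (lam i))) * Q i).coeff (2*n-1)
        = Ires i t := by
      intro i
      have hexp : (Polynomial.C (-(lam i - t)^(2*n-2) * a i)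
          + Polynomial.C (Ires i t) * (Polynomial.X - Polynomial.C (lam i))) * Q i
          = Polynomial.C (-(lam i - t)^(2*n-2) * a i) * Q i
            + Polynomial.C (Ires i t) * (Polynomial.X * Q i)
            - Polynomial.C (Ires i t) * (Polynomial.C (lam i) * Q i) := by
        ring
      rw [hexp]
      rw [Polynomial.coeff_sub, Polynomial.coeff_add, Polynomial.coeff_C_mul,
        Polynomial.coeff_C_mul, Polynomial.coeff_C_mul, Polynomial.coeff_C_mul]
      rw [show 2*n-1 = (2*n-2)+1 by omega, Polynomial.coeff_X_mul]
      rw [show (2*n-2)+1 = 2*n-1 by omega, hQc1, hQc2]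
      ring
    rw [hL, Finset.sum_congr rfl (fun i _ => hterm i)] at hco
    exact hco.symm
  -- transfer the f = 1 identity to ℂ at the point z
  have hzl : ∀ k, (z - (lam k:ℂ)) ≠ 0 := fun k => sub_ne_zero.2 (hzlam k)
  have haQ : ∀ i, Polynomial.aeval z (Q i) = ∏ k ∈ univ.erase i, (z - (lam k:ℂ))^2 := by
    intro i
    show Polynomial.aeval z (∏ k ∈ univ.erase i, (Polynomial.X - Polynomial.C (lam k))^2) = _
    rw [map_prod]
    apply Finset.prod_congr rfl
    intro k _
    simp
  have hS2 : (1:ℂ) = ∑ i, (((a i : ℂ)) + (b i : ℂ) * (z - (lam i:ℂ)))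
      * ∏ k ∈ univ.erase i, (z - (lam k:ℂ))^2 := by
    have h := congrArg (Polynomial.aeval z) hid1
    rw [map_one, map_sum] at h
    rw [h]
    apply Finset.sum_congr rfl
    intro i _
    rw [map_mul, map_add, map_mul, map_sub, Polynomial.aeval_X, Polynomial.aeval_C,
      Polynomial.aeval_C, haQ]
    norm_num
  have hQzne : ∀ i, (∏ k ∈ univ.erase i, (z - (lam k:ℂ))^2) ≠ 0 := by
    intro i
    exact Finset.prod_ne_zero_iff.2 fun k _ => pow_ne_zero 2 (hzl k)
  have key2 : ((∏ i, (z - (lam i : ℂ)))^2)⁻¹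
      = ∑ i, ((a i : ℂ) * ((z - (lam i:ℂ))^2)⁻¹ + (b i : ℂ) * (z - (lam i:ℂ))⁻¹) := by
    have hprodsq : (∏ i, (z - (lam i:ℂ)))^2 = ∏ i, (z - (lam i:ℂ))^2 := by
      rw [← Finset.prod_pow]
    have hsplit : ∀ i, (∏ k, (z - (lam k:ℂ))^2)
        = (z - (lam i:ℂ))^2 * ∏ k ∈ univ.erase i, (z - (lam k:ℂ))^2 :=
      fun i => (Finset.mul_prod_erase univ _ (Finset.mem_univ i)).symm
    calc ((∏ i, (z - (lam i:ℂ)))^2)⁻¹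
        = (∏ k, (z - (lam k:ℂ))^2)⁻¹ * (1:ℂ) := by rw [hprodsq, mul_one]
      _ = ∑ i, (∏ k, (z - (lam k:ℂ))^2)⁻¹ * ((((a i : ℂ)) + (b i : ℂ) * (z - (lam i:ℂ)))
            * ∏ k ∈ univ.erase i, (z - (lam k:ℂ))^2) := by
          rw [← Finset.mul_sum, ← hS2]
      _ = ∑ i, ((a i : ℂ) * ((z - (lam i:ℂ))^2)⁻¹ + (b i : ℂ) * (z - (lam i:ℂ))⁻¹) := by
          apply Finset.sum_congr rfl
          intro i _
          rw [hsplit i, mul_inv]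
          have h1 := hzl i
          have h2 := hQzne i
          field_simp
  -- construction of antiderivatives
  obtain ⟨q, hq⟩ : ∃ q, n = q + 2 := ⟨n - 2, by omega⟩
  have hfactne : ∀ m : ℕ, ((m.factorial : ℂ)) ≠ 0 :=
    fun m => Nat.cast_ne_zero.2 (Nat.factorial_ne_zero m)
  have hPhi : ∀ i : Fin n, ∃ Φ : ℝ → ℂ,
      (∀ t : ℝ, z ≠ (t:ℂ) → HasDerivAt Φ ((Ires i t : ℂ) * (((z - (t:ℂ))^(2*n))⁻¹)) t) ∧
      Filter.Tendsto Φ Filter.atTop (nhds 0) ∧ Filter.Tendsto Φ Filter.atBot (nhds 0) ∧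
      Φ (lam i) = -((((2*n-1:ℕ)):ℂ))⁻¹ * ((a i : ℂ) * ((z - (lam i:ℂ))^2)⁻¹
                    + (b i : ℂ) * (z - (lam i:ℂ))⁻¹) := by
    intro i
    obtain ⟨Φ1, hd1, ht1, hb1, hv1⟩ := psi z (lam i) (hzlam i) (2*n-3) (2*n) (by omega)
    obtain ⟨Φ2, hd2, ht2, hb2, hv2⟩ := psi z (lam i) (hzlam i) (2*n-2) (2*n) (by omega)
    refine ⟨fun t => (-(((2*n-2:ℕ)):ℂ) * (a i : ℂ)) * Φ1 t + (-(b i : ℂ)) * Φ2 t,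
      ?_, ?_, ?_, ?_⟩
    · intro t hzt
      have h := ((hd1 t hzt).const_mul (-(((2*n-2:ℕ)):ℂ) * (a i : ℂ))).fun_add
        ((hd2 t hzt).const_mul (-(b i : ℂ)))
      convert h using 1
      case e'_4 => rfl
      rw [key1 i t]
      push_cast
      ring
    · have := (ht1.const_mul (-(((2*n-2:ℕ)):ℂ) * (a i : ℂ))).add (ht2.const_mul (-(b i : ℂ)))
      simpa using this
    · have := (hb1.const_mul (-(((2*n-2:ℕ)):ℂ) * (a i : ℂ))).add (hb2.const_mul (-(b i : ℂ)))
      simpa using this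
    · show (-(((2*n-2:ℕ)):ℂ) * (a i : ℂ)) * Φ1 (lam i) + (-(b i : ℂ)) * Φ2 (lam i) = _
      rw [hv1, hv2]
      rw [show 2*n-(2*n-3)-2 = 1 by omega, show 2*n-(2*n-3)-1 = 2 by omega,
        show 2*n-(2*n-2)-2 = 0 by omega, show 2*n-(2*n-2)-1 = 1 by omega,
        show 2*n-3 = 2*q+1 by omega, show 2*n-2 = 2*q+2 by omega,
        show 2*n-1 = 2*q+3 by omega]
      have hfac3 : ((2*q+3).factorial : ℂ)
          = ((2*q+3:ℕ):ℂ) * ((2*q+2:ℕ):ℂ) * ((2*q+1).factorial : ℂ) := by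
        rw [show 2*q+3 = (2*q+2)+1 from rfl, Nat.factorial_succ,
          show 2*q+2 = (2*q+1)+1 from rfl, Nat.factorial_succ]
        push_cast
        ring
      have hfac2 : ((2*q+2).factorial : ℂ) = ((2*q+2:ℕ):ℂ) * ((2*q+1).factorial : ℂ) := by
        rw [show 2*q+2 = (2*q+1)+1 from rfl, Nat.factorial_succ]
        push_cast
        ring
      have h3ne : ((2*q+3:ℕ):ℂ) ≠ 0 := Nat.cast_ne_zero.2 (by omega)
      have h2ne : ((2*q+2:ℕ):ℂ) ≠ 0 := Nat.cast_ne_zero.2 (by omega)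
      have hS1 : (((2*q+2:ℕ)):ℂ) * (((2*q+1).factorial : ℂ) * ((Nat.factorial 1 : ℕ):ℂ)
          / ((2*q+3).factorial : ℂ)) = ((((2*q+3:ℕ)):ℂ))⁻¹ := by
        rw [hfac3, Nat.factorial_one, Nat.cast_one]
        have hKF : ((2*q+2:ℕ):ℂ) * ((2*q+1).factorial:ℂ) ≠ 0 := mul_ne_zero h2ne (hfactne _)
        calc ((2*q+2:ℕ):ℂ) * (((2*q+1).factorial:ℂ) * 1
              / (((2*q+3:ℕ):ℂ) * ((2*q+2:ℕ):ℂ) * ((2*q+1).factorial:ℂ)))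
            = (((2*q+3:ℕ):ℂ))⁻¹ * ((((2*q+2:ℕ):ℂ) * ((2*q+1).factorial:ℂ))
                * (((2*q+2:ℕ):ℂ) * ((2*q+1).factorial:ℂ))⁻¹) := by
              rw [div_eq_mul_inv, mul_inv, mul_inv]
              ring
          _ = (((2*q+3:ℕ):ℂ))⁻¹ := by rw [mul_inv_cancel₀ hKF, mul_one]
      have hS2' : (((2*q+2).factorial : ℂ) * ((Nat.factorial 0 : ℕ):ℂ)
          / ((2*q+3).factorial : ℂ)) = ((((2*q+3:ℕ)):ℂ))⁻¹ := by
        rw [hfac3, hfac2, Nat.factorial_zero, Nat.cast_one]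
        have hKF : ((2*q+2:ℕ):ℂ) * ((2*q+1).factorial:ℂ) ≠ 0 := mul_ne_zero h2ne (hfactne _)
        calc ((2*q+2:ℕ):ℂ) * ((2*q+1).factorial:ℂ) * 1
              / (((2*q+3:ℕ):ℂ) * ((2*q+2:ℕ):ℂ) * ((2*q+1).factorial:ℂ))
            = (((2*q+3:ℕ):ℂ))⁻¹ * ((((2*q+2:ℕ):ℂ) * ((2*q+1).factorial:ℂ))
                * (((2*q+2:ℕ):ℂ) * ((2*q+1).factorial:ℂ))⁻¹) := by
              rw [div_eq_mul_inv, mul_inv, mul_inv]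
              ring
          _ = (((2*q+3:ℕ):ℂ))⁻¹ := by rw [mul_inv_cancel₀ hKF, mul_one]
      rw [pow_one]
      calc (-(((2*q+2:ℕ)):ℂ) * (a i : ℂ))
            * (((2*q+1).factorial : ℂ) * ((Nat.factorial 1 : ℕ):ℂ) / ((2*q+3).factorial : ℂ)
               * ((z - (lam i:ℂ))^2)⁻¹)
          + (-(b i : ℂ)) * (((2*q+2).factorial : ℂ) * ((Nat.factorial 0 : ℕ):ℂ)
              / ((2*q+3).factorial : ℂ) * ((z - (lam i:ℂ)))⁻¹)
          = -((((2*q+2:ℕ)):ℂ) * (((2*q+1).factorial : ℂ) * ((Nat.factorial 1 : ℕ):ℂ)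
              / ((2*q+3).factorial : ℂ))) * ((a i:ℂ) * ((z - (lam i:ℂ))^2)⁻¹)
            - (((2*q+2).factorial : ℂ) * ((Nat.factorial 0 : ℕ):ℂ) / ((2*q+3).factorial : ℂ))
              * ((b i:ℂ) * ((z - (lam i:ℂ)))⁻¹) := by ring
        _ = -((((2*q+3:ℕ)):ℂ))⁻¹ * ((a i : ℂ) * ((z - (lam i:ℂ))^2)⁻¹
              + (b i : ℂ) * (z - (lam i:ℂ))⁻¹) := by rw [hS1, hS2']; ring
  choose Φ hΦd hΦt hΦb hΦv using hPhi
  have hzIcc : ∀ t : ℝ, m0 ≤ t → t ≤ M0 → z ≠ (t:ℂ) := fun t h1 h2 => hz t ⟨h1, h2⟩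
  set F : ℝ → ℂ := fun t => (I t : ℂ) / (z - (t:ℂ))^(2*n) with hFdef
  set G : Fin n → ℝ → ℂ := fun i => Set.indicator (Set.Ioc (lam i) M0)
      (fun t => (Ires i t : ℂ) * (((z - (t:ℂ))^(2*n))⁻¹)) with hGdef
  have hIM : ∀ t, M0 < t → I t = 0 := by
    intro t ht
    rw [hI t, Finset.filter_true_of_mem, hsum0 t]
    intro i _
    exact lt_of_le_of_lt (hmem i).2 ht
  have hFG : ∀ t, F t = ∑ i, G i t := by
    intro t
    by_cases ht : t ≤ M0
    · show (I t : ℂ) / (z - (t:ℂ))^(2*n) = _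
      rw [hI t]
      push_cast
      rw [Finset.sum_div, Finset.sum_filter]
      apply Finset.sum_congr rfl
      intro i _
      show _ = Set.indicator (Set.Ioc (lam i) M0) _ t
      rw [Set.indicator_apply]
      by_cases hit : lam i < t
      · rw [if_pos hit, if_pos (Set.mem_Ioc.2 ⟨hit, ht⟩), div_eq_mul_inv]
      · rw [if_neg hit, if_neg (fun h => hit (Set.mem_Ioc.1 h).1)]
    · push_neg at ht
      have h0 : I t = 0 := hIM t ht
      show (I t : ℂ) / (z - (t:ℂ))^(2*n) = _
      rw [h0]
      have hG0 : ∀ i : Fin n, G i t = 0 := fun i =>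
        Set.indicator_of_notMem (fun h => absurd (Set.mem_Ioc.1 h).2 (not_le.2 ht)) _
      rw [Finset.sum_congr rfl (fun i _ => hG0 i)]
      simp
  have hIcont : ∀ i, Continuous (fun t => Ires i t) := by
    intro i
    have heq : (fun t => Ires i t) = fun t => -((2*n-2 : ℕ) : ℝ) * (lam i - t)^(2*n-3) * a i
        - (lam i - t)^(2*n-2) * b i := funext (fun t => key1 i t)
    rw [heq]
    fun_prop
  have hGcont : ∀ i, ContinuousOn (fun t : ℝ => (Ires i t : ℂ) * (((z - (t:ℂ))^(2*n))⁻¹))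
      (Set.Icc (lam i) M0) := by
    intro i
    apply ContinuousOn.mul
    · exact (Complex.continuous_ofReal.comp (hIcont i)).continuousOn
    · apply ContinuousOn.inv₀
      · exact ((continuous_const.sub Complex.continuous_ofReal).pow _).continuousOn
      · intro t ht
        exact pow_ne_zero _ (sub_ne_zero.2 (hzIcc t (le_trans (hmem i).1 ht.1) ht.2))
  have hGint : ∀ i, MeasureTheory.Integrable (G i) := by
    intro i
    rw [hGdef]
    apply MeasureTheory.IntegrableOn.integrable_indicator _ measurableSet_Ioc
    apply MeasureTheory.IntegrableOn.mono_set _ Set.Ioc_subset_Icc_self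
    exact (hGcont i).integrableOn_Icc
  have hIntSum : ∫ t : ℝ, F t = ∑ i, ∫ t : ℝ, G i t := by
    calc ∫ t : ℝ, F t = ∫ t : ℝ, ∑ i, G i t := by
          apply MeasureTheory.integral_congr_ae
          filter_upwards with t
          exact hFG t
      _ = ∑ i, ∫ t : ℝ, G i t := MeasureTheory.integral_finset_sum _ (fun i _ => hGint i)
  have hGval : ∀ i, ∫ t : ℝ, G i t = Φ i M0 - Φ i (lam i) := by
    intro i
    rw [hGdef]
    show ∫ t : ℝ, Set.indicator (Set.Ioc (lam i) M0) _ t = _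
    rw [MeasureTheory.integral_indicator measurableSet_Ioc,
      ← intervalIntegral.integral_of_le (hmem i).2]
    apply intervalIntegral.integral_eq_sub_of_hasDerivAt
    · intro t ht
      rw [Set.uIcc_of_le (hmem i).2] at ht
      exact hΦd i t (hzIcc t (le_trans (hmem i).1 ht.1) ht.2)
    · apply ContinuousOn.intervalIntegrable
      rw [Set.uIcc_of_le (hmem i).2]
      exact hGcont i
  have hsumM0 : ∑ i, Φ i M0 = 0 := by
    set g : ℝ → ℂ := fun t => ∑ i, Φ i t with hgdef
    have hgd : ∀ t : ℝ, z ≠ (t:ℂ) → HasDerivAt g (0:ℂ) t := by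
      intro t hzt
      have h := HasDerivAt.fun_sum (fun i (_ : i ∈ (univ : Finset (Fin n))) => hΦd i t hzt)
      have heq : (∑ i, (Ires i t : ℂ) * (((z - (t:ℂ))^(2*n))⁻¹)) = 0 := by
        rw [← Finset.sum_mul]
        have hcast : (∑ i, ((Ires i t : ℝ) : ℂ)) = (((∑ i, Ires i t) : ℝ) : ℂ) := by
          push_cast
          rfl
        rw [hcast, hsum0 t]
        simp
      rw [heq] at h
      exact h
    have hgt : Filter.Tendsto g Filter.atTop (nhds 0) := by
      have := tendsto_finset_sum (Finset.univ : Finset (Fin n)) (fun i (_ : i ∈ (Finset.univ : Finset (Fin n))) => hΦt i)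
      simpa using this
    have hgb : Filter.Tendsto g Filter.atBot (nhds 0) := by
      have := tendsto_finset_sum (Finset.univ : Finset (Fin n)) (fun i (_ : i ∈ (Finset.univ : Finset (Fin n))) => hΦb i)
      simpa using this
    by_cases hcase : ∀ s : ℝ, M0 ≤ s → z ≠ (s:ℂ)
    · have hconst : ∀ s, M0 ≤ s → g s = g M0 := by
        intro s hs
        have heq := intervalIntegral.integral_eq_sub_of_hasDerivAt
          (f := g) (f' := fun _ => (0:ℂ)) (a := M0) (b := s)
          (fun t ht => by
            rw [Set.uIcc_of_le hs] at ht
            exact hgd t (hcase t ht.1))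
          intervalIntegrable_const
        have h0 : (∫ _ in M0..s, (0:ℂ)) = 0 := by simp
        rw [h0] at heq
        exact (sub_eq_zero.1 heq.symm)
      have hlim : Filter.Tendsto g Filter.atTop (nhds (g M0)) := by
        apply Filter.Tendsto.congr' _ tendsto_const_nhds
        filter_upwards [Filter.eventually_ge_atTop M0] with s hs
        exact (hconst s hs).symm
      exact tendsto_nhds_unique hlim hgt
    · push_neg at hcase
      obtain ⟨s, hs, hzs⟩ := hcase
      have hsM0 : M0 < s := by
        rcases lt_or_eq_of_le hs with h | h
        · exact h
        · exact absurd hzs (h ▸ hz M0 ⟨hm0M0, le_refl M0⟩)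
      have hdown : ∀ t : ℝ, t ≤ M0 → z ≠ (t:ℂ) := by
        intro t ht heq
        rw [hzs] at heq
        have hst : s = t := by exact_mod_cast heq
        linarith
      have hconst : ∀ s', s' ≤ M0 → g s' = g M0 := by
        intro s' hs'
        have heq := intervalIntegral.integral_eq_sub_of_hasDerivAt
          (f := g) (f' := fun _ => (0:ℂ)) (a := s') (b := M0)
          (fun t ht => by
            rw [Set.uIcc_of_le hs'] at ht
            exact hgd t (hdown t ht.2))
          intervalIntegrable_const
        have h0 : (∫ _ in s'..M0, (0:ℂ)) = 0 := by simp
        rw [h0] at heq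
        exact (sub_eq_zero.1 heq.symm).symm
      have hlim : Filter.Tendsto g Filter.atBot (nhds (g M0)) := by
        apply Filter.Tendsto.congr' _ tendsto_const_nhds
        filter_upwards [Filter.eventually_le_atBot M0] with s' hs'
        exact (hconst s' hs').symm
      exact tendsto_nhds_unique hlim hgb
  have hKcast : ((2*n-1:ℕ):ℂ) = 2*(n:ℂ) - 1 := by
    rw [Nat.cast_sub (by omega : 1 ≤ 2*n)]
    push_cast
    ring
  have hKne : ((2*n-1:ℕ):ℂ) ≠ 0 := Nat.cast_ne_zero.2 (by omega)
  calc (2*(n:ℂ) - 1) * ∫ t : ℝ, F t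
      = (2*(n:ℂ) - 1) * ∑ i, (Φ i M0 - Φ i (lam i)) := by
        rw [hIntSum, Finset.sum_congr rfl (fun i _ => hGval i)]
    _ = (2*(n:ℂ) - 1) * ((∑ i, Φ i M0) - ∑ i, Φ i (lam i)) := by
        rw [Finset.sum_sub_distrib]
    _ = (2*(n:ℂ) - 1) * (((2*n-1:ℕ):ℂ))⁻¹
          * ∑ i, ((a i : ℂ) * ((z - (lam i:ℂ))^2)⁻¹ + (b i : ℂ) * (z - (lam i:ℂ))⁻¹) := by
        rw [hsumM0, zero_sub, Finset.sum_congr rfl (fun i _ => hΦv i), ← Finset.mul_sum]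
        ring
    _ = ∑ i, ((a i : ℂ) * ((z - (lam i:ℂ))^2)⁻¹ + (b i : ℂ) * (z - (lam i:ℂ))⁻¹) := by
        rw [← hKcast, mul_inv_cancel₀ hKne, one_mul]
    _ = ((∏ i, (z - (lam i : ℂ)))^2)⁻¹ := key2.symm
end

section
/- Let λ₁, ..., λₙ be distinct reals. The weight function I(t) = Σ_{i : λᵢ < t} Res_{z=λᵢ}(−(z−t)^{2n−2}/p_Λ(z)²), with p_Λ(z) = ∏(z−λᵢ), is non-negative for all t ∈ ℝ. -/
open Finset Polynomial

noncomputable section S8sec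

namespace S8


variable {n : ℕ}

/-- The polynomial `∏_{k ≠ i} (X - λ_k)^2`. -/
def Qp (lam : Fin n → ℝ) (i : Fin n) : ℝ[X] := ∏ k ∈ univ.erase i, (X - C (lam k)) ^ 2

def qv (lam : Fin n → ℝ) (i : Fin n) : ℝ := (Qp lam i).eval (lam i)

def qd (lam : Fin n → ℝ) (i : Fin n) : ℝ := ((Qp lam i).derivative).eval (lam i)

def Pt (n : ℕ) (t : ℝ) : ℝ[X] := (X - C t) ^ (2 * n - 2)

def cA (lam : Fin n → ℝ) (t : ℝ) (i : Fin n) : ℝ := (Pt n t).eval (lam i) / qv lam i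

def cB (lam : Fin n → ℝ) (t : ℝ) (i : Fin n) : ℝ :=
  ((Pt n t).derivative.eval (lam i) * qv lam i - (Pt n t).eval (lam i) * qd lam i) / (qv lam i) ^ 2

def Herm (lam : Fin n → ℝ) (a b : Fin n → ℝ) : ℝ[X] :=
  ∑ i, (C (a i) + C (b i) * (X - C (lam i))) * Qp lam i

lemma qv_pos (lam : Fin n → ℝ) (hdist : Function.Injective lam) (i : Fin n) : 0 < qv lam i := by
  rw [qv, Qp, eval_prod]
  refine Finset.prod_pos fun k hk => ?_
  have hki : k ≠ i := (Finset.mem_erase.1 hk).1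
  have h : lam i - lam k ≠ 0 := sub_ne_zero.2 fun h => hki (hdist h).symm
  simp only [eval_pow, eval_sub, eval_X, eval_C]
  positivity

lemma Qp_eval_zero (lam : Fin n → ℝ) {i j : Fin n} (hij : j ≠ i) :
    (Qp lam i).eval (lam j) = 0 := by
  rw [Qp, eval_prod]
  refine Finset.prod_eq_zero (Finset.mem_erase.2 ⟨hij, Finset.mem_univ _⟩) ?_
  simp

lemma Qp_deriv_eval_zero (lam : Fin n → ℝ) {i j : Fin n} (hij : j ≠ i) :
    ((Qp lam i).derivative).eval (lam j) = 0 := by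
  have hj : j ∈ univ.erase i := Finset.mem_erase.2 ⟨hij, Finset.mem_univ _⟩
  have h : Qp lam i = (X - C (lam j)) ^ 2 * ∏ k ∈ (univ.erase i).erase j, (X - C (lam k)) ^ 2 := by
    rw [Qp, ← Finset.mul_prod_erase _ _ hj]
  rw [h, derivative_mul, derivative_X_sub_C_sq]
  simp

lemma Herm_eval (lam : Fin n → ℝ) (a b : Fin n → ℝ) (j : Fin n) :
    (Herm lam a b).eval (lam j) = a j * qv lam j := by
  rw [Herm, eval_finset_sum]
  rw [Finset.sum_eq_single j]
  · simp [qv]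
  · intro i _ hij
    rw [eval_mul, Qp_eval_zero lam (Ne.symm hij), mul_zero]
  · simp

lemma Herm_deriv_eval (lam : Fin n → ℝ) (a b : Fin n → ℝ) (j : Fin n) :
    ((Herm lam a b).derivative).eval (lam j) = b j * qv lam j + a j * qd lam j := by
  rw [Herm, derivative_sum, eval_finset_sum]
  rw [Finset.sum_eq_single j]
  · rw [derivative_mul]
    simp only [derivative_add, derivative_C, derivative_mul, derivative_X_sub_C, zero_add,
      mul_one, eval_add, eval_mul, eval_C, eval_add, eval_sub, eval_X, sub_self, mul_zero,
      add_zero, zero_mul]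
    rfl
  · intro i _ hij
    rw [derivative_mul, eval_add, eval_mul, eval_mul, Qp_eval_zero lam (Ne.symm hij),
      Qp_deriv_eval_zero lam (Ne.symm hij), mul_zero, mul_zero, add_zero]
  · simp

lemma Qp_monic (lam : Fin n → ℝ) (i : Fin n) : (Qp lam i).Monic :=
  monic_prod_of_monic _ _ fun k _ => (monic_X_sub_C (lam k)).pow 2

lemma Qp_natDegree (lam : Fin n → ℝ) (i : Fin n) : (Qp lam i).natDegree = 2 * n - 2 := by
  rw [Qp, natDegree_prod]
  · have : ∀ k ∈ univ.erase i, ((X - C (lam k)) ^ 2).natDegree = 2 := by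
      intro k _; rw [natDegree_pow, natDegree_X_sub_C]
    rw [Finset.sum_congr rfl this, Finset.sum_const, Finset.card_erase_of_mem (mem_univ i),
      Finset.card_univ, Fintype.card_fin, smul_eq_mul]
    omega
  · intro k _
    exact pow_ne_zero _ (X_sub_C_ne_zero (lam k))

lemma Herm_coeff (hn : 2 ≤ n) (lam : Fin n → ℝ) (a b : Fin n → ℝ) :
    (Herm lam a b).coeff (2 * n - 1) = ∑ i, b i := by
  rw [Herm, finset_sum_coeff]
  refine Finset.sum_congr rfl fun i _ => ?_
  have hrw : (C (a i) + C (b i) * (X - C (lam i))) * Qp lam i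
      = C (a i - b i * lam i) * Qp lam i + C (b i) * (X * Qp lam i) := by
    rw [C_sub, C_mul]; ring
  have hdeg : (Qp lam i).natDegree < 2 * n - 1 := by rw [Qp_natDegree]; omega
  have h1 : (Qp lam i).coeff (2 * n - 1) = 0 := coeff_eq_zero_of_natDegree_lt hdeg
  have h2 : (X * Qp lam i).coeff (2 * n - 1) = 1 := by
    have : 2 * n - 1 = (2 * n - 2) + 1 := by omega
    rw [this, coeff_X_mul, ← Qp_natDegree lam i]
    exact (Qp_monic lam i).coeff_natDegree
  rw [hrw, coeff_add, coeff_C_mul, coeff_C_mul, h1, h2, mul_zero, zero_add, mul_one]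

lemma Herm_natDegree_le (hn : 1 ≤ n) (lam : Fin n → ℝ) (a b : Fin n → ℝ) :
    (Herm lam a b).natDegree ≤ 2 * n - 1 := by
  refine natDegree_sum_le_of_forall_le _ _ fun i _ => ?_
  refine (natDegree_mul_le).trans ?_
  have h1 : (C (a i) + C (b i) * (X - C (lam i))).natDegree ≤ 1 := by
    refine (natDegree_add_le _ _).trans ?_
    simp only [natDegree_C, max_le_iff]
    refine ⟨Nat.zero_le _, (natDegree_mul_le).trans ?_⟩
    simp [natDegree_X_sub_C]
  have h2 := Qp_natDegree lam i
  omega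

lemma Pt_natDegree (n : ℕ) (t : ℝ) : (Pt n t).natDegree = 2 * n - 2 := by
  rw [Pt, natDegree_pow, natDegree_X_sub_C, mul_one]


lemma sq_dvd_of_double_root {p : ℝ[X]} {a : ℝ}
    (h0 : p.eval a = 0) (h1 : p.derivative.eval a = 0) : (X - C a) ^ 2 ∣ p := by
  obtain ⟨q, hq⟩ := (dvd_iff_isRoot.2 h0)
  have hd : p.derivative = q + (X - C a) * q.derivative := by
    rw [hq, derivative_mul, derivative_X_sub_C, one_mul]
  have hqa : q.eval a = 0 := by
    have h2 := h1
    rw [hd] at h2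
    simpa using h2
  obtain ⟨r, hr⟩ := (dvd_iff_isRoot.2 hqa)
  exact ⟨r, by rw [hq, hr]; ring⟩

lemma prod_sq_natDegree (lam : Fin n → ℝ) :
    (∏ i, (X - C (lam i)) ^ 2 : ℝ[X]).natDegree = 2 * n := by
  rw [natDegree_prod]
  · simp [natDegree_pow, natDegree_X_sub_C, Finset.sum_const, Finset.card_univ, mul_comm]
  · intro k _
    exact pow_ne_zero _ (X_sub_C_ne_zero (lam k))

lemma sum_cB (hn : 2 ≤ n) (lam : Fin n → ℝ) (hdist : Function.Injective lam) (t : ℝ) :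
    ∑ i, cB lam t i = 0 := by
  have hqv : ∀ j, qv lam j ≠ 0 := fun j => (qv_pos lam hdist j).ne'
  set E : ℝ[X] := Pt n t - Herm lam (cA lam t) (cB lam t) with hE
  have hroot : ∀ j, E.eval (lam j) = 0 := by
    intro j
    rw [hE, eval_sub, Herm_eval, cA]
    field_simp [hqv j]
    ring
  have hdroot : ∀ j, E.derivative.eval (lam j) = 0 := by
    intro j
    rw [hE, derivative_sub, eval_sub, Herm_deriv_eval, cA, cB]
    field_simp [hqv j]
    ring
  have hdvd : (∏ i, (X - C (lam i)) ^ 2 : ℝ[X]) ∣ E := by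
    refine Finset.prod_dvd_of_coprime ?_ fun i _ => sq_dvd_of_double_root (hroot i) (hdroot i)
    intro i _ j _ hij
    exact ((pairwise_coprime_X_sub_C hdist) hij).pow
  have hE0 : E = 0 := by
    by_contra h
    have h1 := natDegree_le_of_dvd hdvd h
    rw [prod_sq_natDegree] at h1
    have h2 : E.natDegree ≤ 2 * n - 1 := by
      refine (natDegree_sub_le _ _).trans ?_
      have h3 := Herm_natDegree_le (by omega) lam (cA lam t) (cB lam t)
      have h4 := Pt_natDegree n t
      omega
    omega
  have hco : E.coeff (2 * n - 1) = 0 := by rw [hE0]; simp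
  rw [hE, coeff_sub, Herm_coeff hn,
    coeff_eq_zero_of_natDegree_lt (by rw [Pt_natDegree]; omega)] at hco
  linarith

lemma cB_eq_zero_of_eq (hn : 2 ≤ n) (lam : Fin n → ℝ) {t : ℝ} {i : Fin n}
    (h : lam i = t) : cB lam t i = 0 := by
  have h0 : (Pt n t).eval (lam i) = 0 := by
    rw [Pt, eval_pow, eval_sub, eval_X, eval_C, h, sub_self]
    exact zero_pow (by omega)
  have h1 : (Pt n t).derivative.eval (lam i) = 0 := by
    rw [Pt, derivative_X_sub_C_pow]
    simp only [eval_mul, eval_C, eval_pow, eval_sub, eval_X, h, sub_self]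
    rw [zero_pow (by omega : 2 * n - 2 - 1 ≠ 0), mul_zero]
  rw [cB, h0, h1]
  simp



lemma quad_neg {A B C z1 z2 z3 : ℝ} (hA : 0 < A) (h12 : z1 < z2) (h23 : z2 < z3)
    (h1 : A * z1 ^ 2 + B * z1 + C ≤ 0) (h3 : A * z3 ^ 2 + B * z3 + C ≤ 0) :
    A * z2 ^ 2 + B * z2 + C < 0 := by
  by_contra hcon
  push_neg at hcon
  have key : (z3 - z1) * (A * z2 ^ 2 + B * z2 + C)
      = (z3 - z2) * (A * z1 ^ 2 + B * z1 + C) + (z2 - z1) * (A * z3 ^ 2 + B * z3 + C)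
        - A * (z2 - z1) * (z3 - z2) * (z3 - z1) := by ring
  have t1 : (z3 - z2) * (A * z1 ^ 2 + B * z1 + C) ≤ 0 :=
    mul_nonpos_of_nonneg_of_nonpos (by linarith) h1
  have t2 : (z2 - z1) * (A * z3 ^ 2 + B * z3 + C) ≤ 0 :=
    mul_nonpos_of_nonneg_of_nonpos (by linarith) h3
  have t3 : 0 < A * (z2 - z1) * (z3 - z2) * (z3 - z1) := by
    have := mul_pos (mul_pos (mul_pos hA (sub_pos.2 h12)) (sub_pos.2 h23))
      (sub_pos.2 (h12.trans h23))
    linarith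
  have t4 : 0 ≤ (z3 - z1) * (A * z2 ^ 2 + B * z2 + C) :=
    mul_nonneg (by linarith) hcon
  linarith

lemma strictMono_of_lt_succ {M : ℕ} (f : Fin M → ℝ)
    (h : ∀ k, (hk : k + 1 < M) → f ⟨k, Nat.lt_of_succ_lt hk⟩ < f ⟨k + 1, hk⟩) :
    StrictMono f := by
  have key : ∀ d (p : ℕ) (hp : p < M) (hq : p + d + 1 < M), f ⟨p, hp⟩ < f ⟨p + d + 1, hq⟩ := by
    intro d
    induction d with
    | zero => intro p hp hq; exact h p hq
    | succ d ih =>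
      intro p hp hq
      exact lt_trans (ih p hp (by omega)) (h (p + d + 1) hq)
  intro p q hpq
  have h1 : p.val < q.val := hpq
  have hq : q = ⟨p.val + (q.val - p.val - 1) + 1, by omega⟩ := Fin.ext (by simp; omega)
  rw [hq]
  exact key _ p.val p.2 _

lemma rolle_tuple {F G : ℝ → ℝ} (hF : Continuous F) (hFG : ∀ x, deriv F x = G x)
    {N : ℕ} (z : Fin (N + 1) → ℝ) (hz : StrictMono z) (h0 : ∀ j, F (z j) = 0) :
    ∃ y : Fin N → ℝ, StrictMono y ∧ (∀ j, G (y j) = 0) ∧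
      ∀ j : Fin N, z j.castSucc < y j ∧ y j < z j.succ := by
  have H : ∀ j : Fin N, ∃ c, c ∈ Set.Ioo (z j.castSucc) (z j.succ) ∧ deriv F c = 0 := by
    intro j
    obtain ⟨c, hc1, hc2⟩ := exists_deriv_eq_zero (hz (Fin.castSucc_lt_succ : j.castSucc < j.succ)) hF.continuousOn
      ((h0 j.castSucc).trans (h0 j.succ).symm)
    exact ⟨c, hc1, hc2⟩
  choose y hy1 hy2 using H
  refine ⟨y, ?_, fun j => by rw [← hFG]; exact hy2 j, fun j => ⟨(hy1 j).1, (hy1 j).2⟩⟩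
  intro p q hpq
  have h1 : y p < z p.succ := (hy1 p).2
  have h2 : z q.castSucc < y q := (hy1 q).1
  have h3 : z p.succ ≤ z q.castSucc := by
    apply hz.monotone
    have : p.val < q.val := hpq
    simp only [Fin.le_def, Fin.val_succ, Fin.coe_castSucc]
    omega
  linarith

lemma rolle_tuple' {F G : ℝ → ℝ} (hF : Continuous F) (hFG : ∀ x, deriv F x = G x)
    {M N : ℕ} (hMN : M = N + 1) (z : Fin M → ℝ) (hz : StrictMono z) (h0 : ∀ j, F (z j) = 0) :
    ∃ y : Fin N → ℝ, StrictMono y ∧ ∀ j, G (y j) = 0 := by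
  subst hMN
  obtain ⟨y, h1, h2, _⟩ := rolle_tuple hF hFG z hz h0
  exact ⟨y, h1, h2⟩

lemma first_step {F G : ℝ → ℝ} (hF : Continuous F) (hFG : ∀ x, deriv F x = G x)
    {N M : ℕ} (hM : M = 2 * N + 1) (s : Fin (N + 1) → ℝ) (hs : StrictMono s)
    (hFs : ∀ j, F (s j) = 0) (hGs : ∀ j, G (s j) = 0) :
    ∃ w : Fin M → ℝ, StrictMono w ∧ ∀ j, G (w j) = 0 := by
  subst hM
  obtain ⟨y, hy1, hy2, hy3⟩ := rolle_tuple hF hFG s hs hFs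
  set w : Fin (2 * N + 1) → ℝ := fun j =>
    if h : j.val % 2 = 0 then s ⟨j.val / 2, by omega⟩ else y ⟨j.val / 2, by have := j.2; omega⟩
    with hwdef
  have hwe : ∀ (k : ℕ) (hk : k < 2 * N + 1) (h : k % 2 = 0) (hb : k / 2 < N + 1),
      w ⟨k, hk⟩ = s ⟨k / 2, hb⟩ := by
    intro k hk h hb
    simp only [hwdef]
    rw [dif_pos h]
  have hwo : ∀ (k : ℕ) (hk : k < 2 * N + 1) (h : ¬ k % 2 = 0) (hb : k / 2 < N),
      w ⟨k, hk⟩ = y ⟨k / 2, hb⟩ := by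
    intro k hk h hb
    simp only [hwdef]
    rw [dif_neg h]
  refine ⟨w, ?_, ?_⟩
  · apply strictMono_of_lt_succ
    intro k hk
    by_cases h : k % 2 = 0
    · have hb1 : k / 2 < N := by omega
      rw [hwe k _ h (by omega), hwo (k + 1) hk (by omega) (by omega)]
      have hlt := (hy3 ⟨k / 2, hb1⟩).1
      have e1 : (⟨k / 2, by omega⟩ : Fin (N + 1)) = Fin.castSucc ⟨k / 2, hb1⟩ :=
        Fin.ext (by simp)
      have e2 : (⟨(k + 1) / 2, by omega⟩ : Fin N) = ⟨k / 2, hb1⟩ := Fin.ext (by simp; omega)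
      rw [e1, e2]
      exact hlt
    · have h1 : k % 2 = 1 := by omega
      have hb1 : k / 2 < N := by omega
      rw [hwo k _ h (by omega), hwe (k + 1) hk (by omega) (by omega)]
      have hlt := (hy3 ⟨k / 2, hb1⟩).2
      have e2 : (⟨(k + 1) / 2, by omega⟩ : Fin (N + 1)) = Fin.succ ⟨k / 2, hb1⟩ :=
        Fin.ext (by simp [Fin.val_succ]; omega)
      rw [e2]
      exact hlt
  · intro j
    by_cases h : j.val % 2 = 0
    · have e := hwe j.val j.2 h (by omega)
      have : (⟨j.val, j.2⟩ : Fin (2 * N + 1)) = j := Fin.ext rfl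
      rw [this] at e
      rw [e]
      exact hGs _
    · have e := hwo j.val j.2 h (by have := j.2; omega)
      have : (⟨j.val, j.2⟩ : Fin (2 * N + 1)) = j := Fin.ext rfl
      rw [this] at e
      rw [e]
      exact hy2 _


variable {n : ℕ}

def aa (lam : Fin n → ℝ) (t : ℝ) (i : Fin n) : ℝ := if t < lam i then cA lam t i else 0

def bb (lam : Fin n → ℝ) (t : ℝ) (i : Fin n) : ℝ := if t < lam i then cB lam t i else 0

def HH (lam : Fin n → ℝ) (t : ℝ) : ℝ[X] := Herm lam (aa lam t) (bb lam t)

def LL (lam : Fin n → ℝ) (t : ℝ) : ℝ[X] := -HH lam t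

def RR (lam : Fin n → ℝ) (t : ℝ) : ℝ[X] := Pt n t - HH lam t

def phi (lam : Fin n → ℝ) (t : ℝ) (k : ℕ) : ℝ → ℝ := fun x =>
  if x ≤ t then (derivative^[k] (LL lam t)).eval x else (derivative^[k] (RR lam t)).eval x

lemma RR_sub_LL (lam : Fin n → ℝ) (t : ℝ) : RR lam t - LL lam t = Pt n t := by
  rw [RR, LL]; ring

lemma seam (hn : 2 ≤ n) (lam : Fin n → ℝ) (t : ℝ) {k : ℕ} (hk : k ≤ 2 * n - 3) :
    (derivative^[k] (RR lam t)).eval t = (derivative^[k] (LL lam t)).eval t := by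
  have h : (derivative^[k] (RR lam t)) - (derivative^[k] (LL lam t))
      = derivative^[k] (Pt n t) := by
    rw [← iterate_derivative_sub, RR_sub_LL]
  have h2 : (derivative^[k] (Pt n t)).eval t = 0 := by
    rw [Pt, iterate_derivative_X_sub_pow, nsmul_eq_mul, eval_mul, eval_pow, eval_sub, eval_X,
      eval_C, sub_self, zero_pow (by omega : 2 * n - 2 - k ≠ 0), mul_zero]
  have := congrArg (fun p => eval t p) h
  simp only [eval_sub] at this
  linarith [this.trans h2]

lemma phi_cont (hn : 2 ≤ n) (lam : Fin n → ℝ) (t : ℝ) {k : ℕ} (hk : k ≤ 2 * n - 3) :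
    Continuous (phi lam t k) := by
  have hrw : phi lam t k = fun x => if x ≤ t then (derivative^[k] (LL lam t)).eval x
      else (derivative^[k] (RR lam t)).eval x := rfl
  rw [hrw]
  refine Continuous.if_le (Polynomial.continuous _) (Polynomial.continuous _)
    continuous_id continuous_const ?_
  intro x hx
  rw [hx]
  exact (seam hn lam t hk).symm

lemma phi_deriv (hn : 2 ≤ n) (lam : Fin n → ℝ) (t : ℝ) {k : ℕ} (hk : k ≤ 2 * n - 4) (x : ℝ) :
    deriv (phi lam t k) x = phi lam t (k + 1) x := by
  rcases lt_trichotomy x t with hx | hx | hx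
  · have hev : phi lam t k =ᶠ[nhds x] fun y => (derivative^[k] (LL lam t)).eval y := by
      filter_upwards [Iio_mem_nhds hx] with y hy
      simp only [phi]
      rw [if_pos (le_of_lt hy)]
    rw [hev.deriv_eq, Polynomial.deriv]
    simp only [phi]
    rw [if_pos (le_of_lt hx), Function.iterate_succ_apply']
  · subst hx
    have hL : HasDerivWithinAt (phi lam x k) ((derivative^[k + 1] (LL lam x)).eval x)
        (Set.Iic x) x := by
      have h1 : HasDerivWithinAt (fun y => (derivative^[k] (LL lam x)).eval y)
          ((derivative (derivative^[k] (LL lam x))).eval x) (Set.Iic x) x :=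
        (Polynomial.hasDerivAt _ _).hasDerivWithinAt
      rw [show derivative (derivative^[k] (LL lam x)) = derivative^[k + 1] (LL lam x) from
        (Function.iterate_succ_apply' _ _ _).symm] at h1
      refine h1.congr ?_ ?_
      · intro y hy
        simp only [phi]
        rw [if_pos (Set.mem_Iic.mp hy)]
      · simp only [phi]
        rw [if_pos le_rfl]
    have hR : HasDerivWithinAt (phi lam x k) ((derivative^[k + 1] (LL lam x)).eval x)
        (Set.Ici x) x := by
      have h1 : HasDerivWithinAt (fun y => (derivative^[k] (RR lam x)).eval y)
          ((derivative (derivative^[k] (RR lam x))).eval x) (Set.Ici x) x :=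
        (Polynomial.hasDerivAt _ _).hasDerivWithinAt
      rw [show derivative (derivative^[k] (RR lam x)) = derivative^[k + 1] (RR lam x) from
        (Function.iterate_succ_apply' _ _ _).symm] at h1
      rw [show (derivative^[k + 1] (LL lam x)).eval x = (derivative^[k + 1] (RR lam x)).eval x from
        (seam hn lam x (by omega)).symm]
      refine h1.congr ?_ ?_
      · intro y hy
        rcases eq_or_lt_of_le (Set.mem_Ici.mp hy) with h | h
        · subst h
          simp only [phi]
          rw [if_pos le_rfl]
          exact (seam hn lam x (by omega)).symm
        · simp only [phi]
          rw [if_neg (not_le.2 h)]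
      · simp only [phi]
        rw [if_pos le_rfl]
        exact (seam hn lam x (by omega)).symm
    have hU := hL.union hR
    rw [Set.Iic_union_Ici, hasDerivWithinAt_univ] at hU
    rw [hU.deriv]
    simp only [phi]
    rw [if_pos le_rfl]
  · have hev : phi lam t k =ᶠ[nhds x] fun y => (derivative^[k] (RR lam t)).eval y := by
      filter_upwards [Ioi_mem_nhds hx] with y hy
      simp only [phi]
      rw [if_neg (not_le.2 hy)]
    rw [hev.deriv_eq, Polynomial.deriv]
    simp only [phi]
    rw [if_neg (not_le.2 hx), Function.iterate_succ_apply']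

lemma phi_zero_node (hn : 2 ≤ n) (lam : Fin n → ℝ) (hdist : Function.Injective lam) (t : ℝ)
    (j : Fin n) : phi lam t 0 (lam j) = 0 ∧ phi lam t 1 (lam j) = 0 := by
  have hqv : qv lam j ≠ 0 := (qv_pos lam hdist j).ne'
  by_cases hj : lam j ≤ t
  · have ha : aa lam t j = 0 := by rw [aa, if_neg (not_lt.2 hj)]
    have hb : bb lam t j = 0 := by rw [bb, if_neg (not_lt.2 hj)]
    constructor
    · simp only [phi]
      rw [if_pos hj, Function.iterate_zero_apply, LL, eval_neg, HH, Herm_eval, ha, zero_mul,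
        neg_zero]
    · simp only [phi]
      rw [if_pos hj, Function.iterate_one, LL, derivative_neg, eval_neg, HH, Herm_deriv_eval,
        ha, hb, zero_mul, zero_mul, add_zero, neg_zero]
  · have hj' : t < lam j := not_le.1 hj
    have ha : aa lam t j = cA lam t j := by rw [aa, if_pos hj']
    have hb : bb lam t j = cB lam t j := by rw [bb, if_pos hj']
    constructor
    · simp only [phi]
      rw [if_neg hj, Function.iterate_zero_apply, RR, eval_sub, HH, Herm_eval, ha, cA]
      field_simp
      ring
    · simp only [phi]
      rw [if_neg hj, Function.iterate_one, RR, derivative_sub, eval_sub, HH, Herm_deriv_eval,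
        ha, hb, cA, cB]
      field_simp
      ring

lemma key (hn : 2 ≤ n) (lam : Fin n → ℝ) (hdist : Function.Injective lam) (t : ℝ) :
    0 ≤ ∑ i, bb lam t i := by
  by_contra hcon
  push_neg at hcon
  -- sorted nodes
  have hs0 : StrictMono (lam ∘ Tuple.sort lam) :=
    (Tuple.monotone_sort lam).strictMono_of_injective
      (hdist.comp (Tuple.sort lam).injective)
  set s : Fin ((n - 1) + 1) → ℝ :=
    (lam ∘ Tuple.sort lam) ∘ Fin.cast (show (n - 1) + 1 = n by omega) with hsdef
  have hs : StrictMono s := by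
    intro a b hab
    exact hs0 (show (Fin.cast _ a : Fin n) < Fin.cast _ b from hab)
  -- the zero chain
  have chain : ∀ k, 1 ≤ k → k ≤ 2 * n - 3 →
      ∃ z : Fin (2 * n - k) → ℝ, StrictMono z ∧ ∀ j, phi lam t k (z j) = 0 := by
    intro k
    induction k with
    | zero => omega
    | succ k ih =>
      intro hk1 hk2
      rcases Nat.lt_or_ge 0 k with h1 | h1
      · obtain ⟨z, hz, hz0⟩ := ih (by omega) (by omega)
        exact rolle_tuple' (phi_cont hn lam t (by omega))
          (phi_deriv hn lam t (by omega)) (by omega) z hz hz0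
      · -- k = 0 : base case, zeros of phi 1
        have hk0 : k = 0 := by omega
        subst hk0
        refine first_step (phi_cont hn lam t (by omega)) (phi_deriv hn lam t (by omega))
          (by omega) s hs ?_ ?_
        · intro j
          exact (phi_zero_node hn lam hdist t _).1
        · intro j
          exact (phi_zero_node hn lam hdist t _).2
  obtain ⟨z, hz, hz0⟩ := chain (2 * n - 3) (by omega) le_rfl
  -- three zeros
  have h3 : (3 : ℕ) ≤ 2 * n - (2 * n - 3) := by omega
  set z1 := z ⟨0, by omega⟩ with hz1
  set z2 := z ⟨1, by omega⟩ with hz2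
  set z3 := z ⟨2, by omega⟩ with hz3
  have h12 : z1 < z2 := hz (show (⟨0, by omega⟩ : Fin (2 * n - (2 * n - 3))) < ⟨1, by omega⟩
    from by simp [Fin.lt_def])
  have h23 : z2 < z3 := hz (show (⟨1, by omega⟩ : Fin (2 * n - (2 * n - 3))) < ⟨2, by omega⟩
    from by simp [Fin.lt_def])
  -- quadratic pieces
  set V : ℝ[X] := derivative^[2 * n - 3] (LL lam t) with hV
  set W : ℝ[X] := derivative^[2 * n - 3] (RR lam t) with hW
  set ν : ℝ := ((2 * n - 1).descFactorial (2 * n - 3) : ℝ) with hnu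
  have hν : 0 < ν := by
    rw [hnu]
    exact_mod_cast Nat.pos_of_ne_zero (by rw [Ne, Nat.descFactorial_eq_zero_iff_lt]; omega)
  set A : ℝ := ν * (-(∑ i, bb lam t i)) with hA
  have hApos : 0 < A := mul_pos hν (by linarith)
  have hVco : V.coeff 2 = A := by
    rw [hV, Polynomial.coeff_iterate_derivative,
      show 2 + (2 * n - 3) = 2 * n - 1 by omega, LL, coeff_neg, HH, Herm_coeff hn,
      nsmul_eq_mul, hA, hnu]
    try ring
  have hWco : W.coeff 2 = A := by
    rw [hW, Polynomial.coeff_iterate_derivative,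
      show 2 + (2 * n - 3) = 2 * n - 1 by omega, RR, coeff_sub,
      coeff_eq_zero_of_natDegree_lt (show (Pt n t).natDegree < 2 * n - 1 by
        rw [Pt_natDegree]; omega),
      HH, Herm_coeff hn, nsmul_eq_mul, hA, hnu]
    ring
  have hVdeg : V.natDegree < 3 := by
    have h1 : (LL lam t).natDegree ≤ 2 * n - 1 := by
      rw [LL, natDegree_neg, HH]
      exact Herm_natDegree_le (by omega) lam _ _
    have h2 := Polynomial.natDegree_iterate_derivative (LL lam t) (2 * n - 3)
    rw [← hV] at h2
    omega
  have hWdeg : W.natDegree < 3 := by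
    have h1 : (RR lam t).natDegree ≤ 2 * n - 1 := by
      rw [RR]
      refine (natDegree_sub_le _ _).trans ?_
      have h3 := Pt_natDegree n t
      have h4 : (HH lam t).natDegree ≤ 2 * n - 1 := Herm_natDegree_le (by omega) lam _ _
      omega
    have h2 := Polynomial.natDegree_iterate_derivative (RR lam t) (2 * n - 3)
    rw [← hW] at h2
    omega
  have hVeval : ∀ x : ℝ, V.eval x = A * x ^ 2 + V.coeff 1 * x + V.coeff 0 := by
    intro x
    rw [Polynomial.eval_eq_sum_range' hVdeg, Finset.sum_range_succ, Finset.sum_range_succ,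
      Finset.sum_range_succ, Finset.sum_range_zero, hVco]
    ring
  have hWeval : ∀ x : ℝ, W.eval x = A * x ^ 2 + W.coeff 1 * x + W.coeff 0 := by
    intro x
    rw [Polynomial.eval_eq_sum_range' hWdeg, Finset.sum_range_succ, Finset.sum_range_succ,
      Finset.sum_range_succ, Finset.sum_range_zero, hWco]
    ring
  set d : ℝ := ((2 * n - 2).descFactorial (2 * n - 3) : ℝ) with hd
  have hdpos : 0 < d := by
    rw [hd]
    exact_mod_cast Nat.pos_of_ne_zero (by rw [Ne, Nat.descFactorial_eq_zero_iff_lt]; omega)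
  have hWV : ∀ x : ℝ, W.eval x = V.eval x + d * (x - t) := by
    intro x
    have h : W - V = derivative^[2 * n - 3] (Pt n t) := by
      rw [hW, hV, ← iterate_derivative_sub, RR_sub_LL]
    have h2 : derivative^[2 * n - 3] (Pt n t)
        = (2 * n - 2).descFactorial (2 * n - 3) • (X - C t) ^ 1 := by
      rw [Pt, iterate_derivative_X_sub_pow, show 2 * n - 2 - (2 * n - 3) = 1 by omega]
    have h3 := congrArg (fun p => eval x p) (h.trans h2)
    simp only [eval_sub, nsmul_eq_mul, eval_mul, eval_natCast, eval_pow, eval_sub, eval_X,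
      eval_C, pow_one] at h3
    rw [hd]
    linarith
  have hfact : ∀ u : ℝ, phi lam t (2 * n - 3) u = 0 →
      (V.eval u ≤ 0 ∧ W.eval u ≤ 0) ∧ (V.eval u = 0 ∨ W.eval u = 0) := by
    intro u hu
    by_cases hj : u ≤ t
    · have hV0 : V.eval u = 0 := by
        simp only [phi] at hu
        rw [if_pos hj] at hu
        rw [hV]
        exact hu
      have hW0 : W.eval u ≤ 0 := by
        rw [hWV u, hV0, zero_add]
        exact mul_nonpos_of_nonneg_of_nonpos hdpos.le (by linarith)
      exact ⟨⟨hV0.le, hW0⟩, Or.inl hV0⟩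
    · have hW0 : W.eval u = 0 := by
        simp only [phi] at hu
        rw [if_neg hj] at hu
        rw [hW]
        exact hu
      have hV0 : V.eval u ≤ 0 := by
        have h5 := hWV u
        rw [hW0] at h5
        push_neg at hj
        have h1 : 0 ≤ d * (u - t) := mul_nonneg hdpos.le (by linarith)
        linarith
      exact ⟨⟨hV0, hW0.le⟩, Or.inr hW0⟩
  have f1 := hfact z1 (hz0 _)
  have f2 := hfact z2 (hz0 _)
  have f3 := hfact z3 (hz0 _)
  have hVneg : V.eval z2 < 0 := by
    have h1 := f1.1.1
    have h3 := f3.1.1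
    rw [hVeval] at h1 h3 ⊢
    exact quad_neg hApos h12 h23 h1 h3
  have hWneg : W.eval z2 < 0 := by
    have h1 := f1.1.2
    have h3 := f3.1.2
    rw [hWeval] at h1 h3 ⊢
    exact quad_neg hApos h12 h23 h1 h3
  rcases f2.2 with h | h
  · rw [h] at hVneg
    exact lt_irrefl 0 hVneg
  · rw [h] at hWneg
    exact lt_irrefl 0 hWneg

end S8

/-- Non-negativity of the weight `I(t) = ∑_{i : λᵢ < t} Res_{z=λᵢ}(-(z-t)^(2n-2)/p_Λ(z)^2)`,
where the residue at the double pole `λᵢ` is the derivative at `λᵢ` of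
`z ↦ (z-λᵢ)^2 · S(z,t)`. -/
theorem stmt8 (n : ℕ) (hn : 2 ≤ n) (lam : Fin n → ℝ) (hdist : Function.Injective lam)
    (Ires : Fin n → ℝ → ℝ)
    (hIres : ∀ i t, Ires i t =
      deriv (fun z : ℝ => -(z - t) ^ (2 * n - 2) /
        ∏ k ∈ univ.erase i, (z - lam k) ^ 2) (lam i))
    (I : ℝ → ℝ)
    (hI : ∀ t, I t = ∑ i ∈ univ.filter (fun i => lam i < t), Ires i t) :
    ∀ t, 0 ≤ I t := by
  intro t
  have hIval : ∀ i : Fin n, Ires i t = -(S8.cB lam t i) := by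
    intro i
    rw [hIres i t]
    have hfe : (fun z : ℝ => -(z - t) ^ (2 * n - 2) / ∏ k ∈ univ.erase i, (z - lam k) ^ 2)
        = fun z => -((S8.Pt n t).eval z / (S8.Qp lam i).eval z) := by
      funext z
      have e1 : (S8.Pt n t).eval z = (z - t) ^ (2 * n - 2) := by
        rw [S8.Pt]
        simp
      have e2 : (S8.Qp lam i).eval z = ∏ k ∈ univ.erase i, (z - lam k) ^ 2 := by
        rw [S8.Qp, eval_prod]
        simp
      rw [e1, e2, neg_div]
    rw [hfe, deriv.fun_neg]
    congr 1
    have hq : (S8.Qp lam i).eval (lam i) ≠ 0 := (S8.qv_pos lam hdist i).ne'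
    have hder := ((S8.Pt n t).hasDerivAt (lam i)).fun_div ((S8.Qp lam i).hasDerivAt (lam i)) hq
    rw [hder.deriv, S8.cB, S8.qv, S8.qd]
  have hsum := S8.sum_cB hn lam hdist t
  have hkey := S8.key hn lam hdist t
  have hsplit : ∑ i ∈ univ.filter (fun i => lam i < t), S8.cB lam t i
      + ∑ i ∈ univ.filter (fun i => ¬ lam i < t), S8.cB lam t i = 0 := by
    rw [Finset.sum_filter_add_sum_filter_not]
    exact hsum
  have h2 : ∑ i ∈ univ.filter (fun i => ¬ lam i < t), S8.cB lam t i
      = ∑ i, S8.bb lam t i := by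
    have hbb : ∑ i, S8.bb lam t i
        = ∑ i ∈ univ.filter (fun i => t < lam i), S8.cB lam t i := by
      rw [Finset.sum_filter]
      refine Finset.sum_congr rfl fun i _ => ?_
      rw [S8.bb]
    rw [hbb]
    symm
    apply Finset.sum_subset
    · intro i hi
      simp only [Finset.mem_filter, Finset.mem_univ, true_and] at hi ⊢
      exact not_lt.2 (le_of_lt hi)
    · intro i hi hni
      simp only [Finset.mem_filter, Finset.mem_univ, true_and] at hi hni
      have he : lam i = t := le_antisymm (not_lt.1 hni) (not_lt.1 hi)
      exact S8.cB_eq_zero_of_eq hn lam he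
  have e1 : ∑ i ∈ univ.filter (fun i => lam i < t), Ires i t
      = ∑ i ∈ univ.filter (fun i => lam i < t), -(S8.cB lam t i) :=
    Finset.sum_congr rfl fun i _ => hIval i
  rw [hI t, e1, Finset.sum_neg_distrib]
  linarith

end S8sec
end

section
/- Let λ₁, ..., λₙ be distinct reals and λ₀ ∈ ℝ. The weight function J_{λ₀}(t) = Σ_{0≤i≤n, λᵢ<t} Res_{z=λᵢ}(−(z−t)^{2n−1}/((z−λ₀)∏_{k=1}^n(z−λ_k)²)) is non-negative for all t ∈ ℝ. -/
open Finset

namespace Stmt13Aux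

noncomputable def dd (x : ℕ → ℝ) (f : ℝ → ℝ) : ℕ → ℕ → ℝ
  | a, b =>
    if h : a < b then (dd x f (a+1) b - dd x f a (b-1)) / (x b - x a)
    else f (x a)
  termination_by a b => b - a
  decreasing_by all_goals omega

variable {x : ℕ → ℝ} {f g : ℝ → ℝ}

lemma dd_self (a : ℕ) : dd x f a a = f (x a) := by
  rw [dd]; simp

lemma dd_of_lt {a b : ℕ} (h : a < b) :
    dd x f a b = (dd x f (a+1) b - dd x f a (b-1)) / (x b - x a) := by
  rw [dd]; simp [h]

lemma dd_congr : ∀ k a b, b - a ≤ k → a ≤ b →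
    (∀ j, a ≤ j → j ≤ b → f (x j) = g (x j)) → dd x f a b = dd x g a b := by
  intro k
  induction k with
  | zero =>
    intro a b h1 h2 h3
    have : a = b := by omega
    subst this
    rw [dd_self, dd_self, h3 a le_rfl le_rfl]
  | succ k ih =>
    intro a b h1 h2 h3
    rcases eq_or_lt_of_le h2 with rfl | hlt
    · rw [dd_self, dd_self, h3 a le_rfl le_rfl]
    · rw [dd_of_lt hlt, dd_of_lt hlt,
        ih (a+1) b (by omega) (by omega) (fun j hj1 hj2 => h3 j (by omega) hj2),
        ih a (b-1) (by omega) (by omega) (fun j hj1 hj2 => h3 j hj1 (by omega))]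

lemma dd_zero_fun : ∀ k a b, b - a ≤ k → dd x (fun _ => (0:ℝ)) a b = 0 := by
  intro k
  induction k with
  | zero =>
    intro a b h
    rcases lt_or_ge a b with hlt | hge
    · omega
    · rw [dd]; simp [not_lt.2 hge, Nat.not_lt.2 hge]
  | succ k ih =>
    intro a b h
    rcases lt_or_ge a b with hlt | hge
    · rw [dd_of_lt hlt, ih (a+1) b (by omega), ih a (b-1) (by omega)]; ring
    · rw [dd]; simp [Nat.not_lt.2 hge]

lemma dd_const : ∀ k a b, b - a ≤ k → a < b → dd x (fun _ => (1:ℝ)) a b = 0 := by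
  intro k
  induction k with
  | zero => intro a b h1 h2; omega
  | succ k ih =>
    intro a b h1 h2
    rw [dd_of_lt h2]
    rcases Nat.lt_or_ge (a+1) b with hlt | hge
    · rw [ih (a+1) b (by omega) hlt, ih a (b-1) (by omega) (by omega)]; ring
    · have hb : b = a + 1 := by omega
      subst hb
      simp [dd_self]

/-- Leibniz-type rule for multiplication by a linear factor. -/
lemma dd_linear_mul (hx : StrictMono x) (t : ℝ) : ∀ k a b, b - a ≤ k → a ≤ b →
    dd x (fun y => (y - t) * g y) a b
      = (x a - t) * dd x g a b + (if a < b then dd x g (a+1) b else 0) := by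
  intro k
  induction k with
  | zero =>
    intro a b h1 h2
    have : a = b := by omega
    subst this
    simp [dd_self]
  | succ k ih =>
    intro a b h1 h2
    rcases eq_or_lt_of_le h2 with rfl | hlt
    · simp [dd_self]
    · have hba : x b - x a ≠ 0 := sub_ne_zero.2 (ne_of_gt (hx hlt))
      rw [dd_of_lt hlt]
      rw [ih (a+1) b (by omega) (by omega), ih a (b-1) (by omega) (by omega)]
      simp only [hlt, if_pos]
      rcases Nat.lt_or_ge (a+1) b with hlt2 | hge2
      · have hb1 : a < b - 1 := by omega
        have hb2 : b - 1 + 1 = b := by omega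
        have hba2 : x b - x (a+1) ≠ 0 := sub_ne_zero.2 (ne_of_gt (hx hlt2))
        simp only [hlt2, if_pos, hb1, if_pos]
        rw [dd_of_lt hlt, dd_of_lt hlt2]
        field_simp
        ring
      · have hb : b = a + 1 := by omega
        subst hb
        simp only [lt_irrefl, if_neg, not_false_iff, add_tsub_cancel_right, dd_self,
          show ¬ (a < a) from lt_irrefl a, if_false]
        rw [dd_of_lt hlt]
        simp only [add_tsub_cancel_right, dd_self]
        field_simp
        ring

/-- The divided difference of `(y-t)^d` over more than `d+1` nodes vanishes. -/
lemma dd_pow (hx : StrictMono x) (t : ℝ) : ∀ d a b, d < b - a →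
    dd x (fun y => (y - t)^d) a b = 0 := by
  intro d
  induction d with
  | zero =>
    intro a b h
    have : dd x (fun y => ((y:ℝ) - t)^0) a b = dd x (fun _ => (1:ℝ)) a b := by
      apply dd_congr (b-a) a b le_rfl (by omega)
      intro j _ _; simp
    rw [this, dd_const (b-a) a b le_rfl (by omega)]
  | succ d ih =>
    intro a b h
    have hab : a < b := by omega
    have : dd x (fun y => ((y:ℝ) - t)^(d+1)) a b
        = dd x (fun y => (y - t) * ((y:ℝ) - t)^d) a b := by
      apply dd_congr (b-a) a b le_rfl (by omega)
      intro j _ _; ring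
    rw [this, dd_linear_mul hx t (b-a) a b le_rfl (by omega),
      ih a b (by omega), ih (a+1) b (by omega)]
    simp

/-- Positivity of divided differences of truncated powers (B-spline positivity). -/
lemma dd_trunc_nonneg (hx : StrictMono x) : ∀ m a b t, b - a = m → 1 ≤ m →
    0 ≤ dd x (fun y => if t < y then (y - t)^(m-1) else 0) a b := by
  intro m
  induction m with
  | zero => intro a b t _ h; omega
  | succ m ih =>
    intro a b t hm _
    have hab : a < b := by omega
    rcases Nat.eq_zero_or_pos m with rfl | hm1
    · -- two nodes, indicator function
      have hb : b = a + 1 := by omega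
      subst hb
      rw [dd_of_lt hab]
      simp only [add_tsub_cancel_right, dd_self, pow_zero]
      have hxx : 0 < x (a+1) - x a := sub_pos.2 (hx hab)
      apply div_nonneg _ (le_of_lt hxx)
      rcases lt_or_ge t (x a) with h1 | h1
      · have h2 : t < x (a+1) := lt_trans h1 (hx hab)
        simp [h1, h2]
      · rcases lt_or_ge t (x (a+1)) with h2 | h2
        · simp [h2, not_lt.2 h1]
        · simp [not_lt.2 h1, not_lt.2 h2]
    · -- m+1 ≥ 2
      rcases le_or_gt t (x a) with h1 | h1
      · -- all nodes ≥ t : the function agrees with the polynomial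
        have : dd x (fun y => if t < y then (y - t)^(m+1-1) else 0) a b
            = dd x (fun y => (y - t)^m) a b := by
          apply dd_congr (b-a) a b le_rfl (by omega)
          intro j hj1 hj2
          have hxj : t ≤ x j := le_trans h1 (hx.monotone hj1)
          rcases lt_or_eq_of_le hxj with h | h
          · simp [h]
          · simp [← h, zero_pow (by omega : m ≠ 0)]
        rw [this, dd_pow hx t m a b (by omega)]
      rcases le_or_gt (x b) t with h2 | h2
      · -- all nodes ≤ t : function vanishes on the nodes
        have : dd x (fun y => if t < y then (y - t)^(m+1-1) else 0) a b
            = dd x (fun _ => (0:ℝ)) a b := by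
          apply dd_congr (b-a) a b le_rfl (by omega)
          intro j _ hj2
          have : x j ≤ t := le_trans (hx.monotone hj2) h2
          simp [not_lt.2 this]
        rw [this, dd_zero_fun (b-a) a b le_rfl]
      · -- x a < t < x b : Cox-de Boor recurrence
        set h : ℝ → ℝ := fun y => if t < y then (y - t)^(m-1) else 0 with hh
        have hfact : (fun y => if t < y then ((y:ℝ) - t)^(m+1-1) else 0)
            = fun y => (y - t) * h y := by
          funext y
          rcases lt_or_ge t y with hy | hy
          · simp only [hh, hy, if_pos]
            rw [show m+1-1 = (m-1)+1 by omega]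
            ring
          · simp [hh, not_lt.2 hy]
        rw [hfact, dd_linear_mul hx t (b-a) a b le_rfl (by omega)]
        simp only [hab, if_pos]
        rw [dd_of_lt hab]
        have hA : 0 ≤ dd x h (a+1) b := ih (a+1) b t (by omega) hm1
        have hB : 0 ≤ dd x h a (b-1) := ih a (b-1) t (by omega) hm1
        have hv : 0 < x b - x a := sub_pos.2 (hx hab)
        have key : (x a - t) * ((dd x h (a+1) b - dd x h a (b-1)) / (x b - x a))
              + dd x h (a+1) b
            = ((x b - t) * dd x h (a+1) b + (t - x a) * dd x h a (b-1)) / (x b - x a) := by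
          field_simp
          ring
        rw [key]
        apply div_nonneg _ (le_of_lt hv)
        have := le_of_lt h2
        nlinarith [hA, hB, sub_nonneg.2 (le_of_lt h1), sub_nonneg.2 (le_of_lt h2)]

/-- Symmetric (Lagrange) formula for divided differences at distinct nodes. -/
lemma dd_eq_sum (hx : StrictMono x) (f : ℝ → ℝ) : ∀ k a b, a ≤ b → b - a = k →
    dd x f a b = ∑ i ∈ Icc a b, f (x i) / ∏ j ∈ (Icc a b).erase i, (x i - x j) := by
  have hne : ∀ {i j : ℕ}, i ≠ j → x i - x j ≠ 0 := fun h =>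
    sub_ne_zero.2 (fun he => h (hx.injective he))
  intro k
  induction k with
  | zero =>
    intro a b hle h
    have : a = b := by omega
    subst this
    simp [dd_self, Finset.Icc_self]
  | succ k ih =>
    intro a b hle hk
    have hab : a < b := by omega
    have hv : x b - x a ≠ 0 := sub_ne_zero.2 (ne_of_gt (hx hab))
    rcases Nat.lt_or_ge (a+1) b with hlt2 | hge2
    · -- general case, middle M nonempty
      set M : Finset ℕ := Icc (a+1) (b-1) with hM
      have hbM : b ∉ M := by simp only [hM, Finset.mem_Icc]; omega
      have haM : a ∉ M := by simp only [hM, Finset.mem_Icc]; omega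
      have haBM : a ∉ insert b M := by
        simp only [hM, Finset.mem_insert, Finset.mem_Icc]; omega
      have hI1 : Icc (a+1) b = insert b M := by ext j; simp [hM]; omega
      have hI0 : Icc a (b-1) = insert a M := by ext j; simp [hM]; omega
      have hI : Icc a b = insert a (insert b M) := by ext j; simp [hM]; omega
      have hMmemlt : ∀ i ∈ M, a < i ∧ i < b := by
        intro i hi; rw [hM, Finset.mem_Icc] at hi; omega
      have hC : ∀ i ∈ M, (∏ j ∈ M.erase i, (x i - x j)) ≠ 0 := by
        intro i hi
        rw [Finset.prod_ne_zero_iff]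
        intro j hj
        exact hne (Ne.symm (Finset.mem_erase.1 hj).1)
      have hQA : (∏ j ∈ M, (x a - x j)) ≠ 0 := by
        rw [Finset.prod_ne_zero_iff]
        intro j hj; exact hne (show a ≠ j by have := hMmemlt j hj; omega)
      have hQB : (∏ j ∈ M, (x b - x j)) ≠ 0 := by
        rw [Finset.prod_ne_zero_iff]
        intro j hj; exact hne (show b ≠ j by have := hMmemlt j hj; omega)
      rw [dd_of_lt hab, ih (a+1) b (by omega) (by omega), ih a (b-1) (by omega) (by omega),
        hI1, hI0, hI, div_eq_iff hv]
      have hS1 : (∑ i ∈ insert b M, f (x i) / ∏ j ∈ (insert b M).erase i, (x i - x j))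
          = f (x b) / ∏ j ∈ M, (x b - x j)
            + ∑ i ∈ M, f (x i) / ((x i - x b) * ∏ j ∈ M.erase i, (x i - x j)) := by
        rw [Finset.sum_insert hbM, Finset.erase_insert hbM]
        congr 1
        apply Finset.sum_congr rfl
        intro i hi
        rw [Finset.erase_insert_of_ne (show b ≠ i by rintro rfl; exact hbM hi),
          Finset.prod_insert (fun h => hbM (Finset.mem_of_mem_erase h))]
      have hS0 : (∑ i ∈ insert a M, f (x i) / ∏ j ∈ (insert a M).erase i, (x i - x j))
          = f (x a) / ∏ j ∈ M, (x a - x j)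
            + ∑ i ∈ M, f (x i) / ((x i - x a) * ∏ j ∈ M.erase i, (x i - x j)) := by
        rw [Finset.sum_insert haM, Finset.erase_insert haM]
        congr 1
        apply Finset.sum_congr rfl
        intro i hi
        rw [Finset.erase_insert_of_ne (show a ≠ i by rintro rfl; exact haM hi),
          Finset.prod_insert (fun h => haM (Finset.mem_of_mem_erase h))]
      have hS : (∑ i ∈ insert a (insert b M),
            f (x i) / ∏ j ∈ (insert a (insert b M)).erase i, (x i - x j))
          = f (x a) / ((x a - x b) * ∏ j ∈ M, (x a - x j))
            + (f (x b) / ((x b - x a) * ∏ j ∈ M, (x b - x j))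
              + ∑ i ∈ M, f (x i) /
                  ((x i - x a) * ((x i - x b) * ∏ j ∈ M.erase i, (x i - x j)))) := by
        rw [Finset.sum_insert haBM, Finset.erase_insert haBM, Finset.prod_insert hbM]
        congr 1
        rw [Finset.sum_insert hbM]
        congr 1
        · rw [Finset.erase_insert_of_ne (show a ≠ b by omega), Finset.erase_insert hbM,
            Finset.prod_insert haM]
        · apply Finset.sum_congr rfl
          intro i hi
          have hai : a ≠ i := by rintro rfl; exact haM hi
          have hbi : b ≠ i := by rintro rfl; exact hbM hi
          rw [Finset.erase_insert_of_ne hai, Finset.erase_insert_of_ne hbi,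
            Finset.prod_insert (show a ∉ insert b (M.erase i) by
              simp only [Finset.mem_insert, Finset.mem_erase]
              push_neg
              exact ⟨show a ≠ b by omega, fun _ => haM⟩),
            Finset.prod_insert (fun h => hbM (Finset.mem_of_mem_erase h))]
      rw [hS1, hS0, hS, add_mul, add_mul, Finset.sum_mul]
      have hab' : x a - x b ≠ 0 := sub_ne_zero.2 (ne_of_lt (hx hab))
      have hea : f (x a) / ((x a - x b) * ∏ j ∈ M, (x a - x j)) * (x b - x a)
          = -(f (x a) / ∏ j ∈ M, (x a - x j)) := by
        rw [div_mul_eq_mul_div, neg_div', div_eq_div_iff (mul_ne_zero hab' hQA) hQA]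
        ring
      have heb : f (x b) / ((x b - x a) * ∏ j ∈ M, (x b - x j)) * (x b - x a)
          = f (x b) / ∏ j ∈ M, (x b - x j) := by
        rw [div_mul_eq_mul_div, div_eq_div_iff (mul_ne_zero hv hQB) hQB]
        ring
      have hsum : (∑ i ∈ M, f (x i) / ((x i - x b) * ∏ j ∈ M.erase i, (x i - x j)))
            - ∑ i ∈ M, f (x i) / ((x i - x a) * ∏ j ∈ M.erase i, (x i - x j))
          = ∑ i ∈ M, f (x i) /
              ((x i - x a) * ((x i - x b) * ∏ j ∈ M.erase i, (x i - x j))) * (x b - x a) := by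
        rw [← Finset.sum_sub_distrib]
        apply Finset.sum_congr rfl
        intro i hi
        have h1 : x i - x a ≠ 0 := hne (show i ≠ a by have := hMmemlt i hi; omega)
        have h2 : x i - x b ≠ 0 := hne (show i ≠ b by have := hMmemlt i hi; omega)
        have h3 := hC i hi
        field_simp
        ring
      linear_combination hsum - hea - heb
    · -- two-node case b = a+1
      have hb : b = a + 1 := by omega
      subst hb
      rw [dd_of_lt hab, dd_self]
      have h1 : dd x f a (a+1-1) = f (x a) := by
        simp only [add_tsub_cancel_right, dd_self]
      rw [h1]
      have hI : Icc a (a+1) = insert a {a+1} := by ext j; simp; omega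
      have haS : a ∉ ({a+1} : Finset ℕ) := by simp
      rw [hI, Finset.sum_insert haS, Finset.sum_singleton, Finset.erase_insert haS,
        Finset.erase_insert_of_ne (show a ≠ a+1 by omega), Finset.erase_singleton]
      simp only [LawfulSingleton.insert_empty_eq, Finset.prod_singleton]
      rw [div_eq_iff hv]
      have h2 : x a - x (a+1) ≠ 0 := hne (show a ≠ a+1 by omega)
      field_simp
      ring

/-- Any finite set of `m+1` reals admits a strictly monotone global enumeration. -/
lemma exists_enum (s : Finset ℝ) (m : ℕ) (hcard : s.card = m + 1) :
    ∃ x : ℕ → ℝ, StrictMono x ∧ (Icc 0 m).image x = s := by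
  have hm1 : m < m + 1 := Nat.lt_succ_self m
  set f := s.orderEmbOfFin hcard with hf
  refine ⟨fun j => if h : j < m + 1 then f ⟨j, h⟩ else f ⟨m, hm1⟩ + (j - m : ℝ), ?_, ?_⟩
  · intro p q hpq
    dsimp only
    rcases lt_or_ge q (m+1) with hq | hq
    · have hp : p < m + 1 := lt_trans hpq hq
      rw [dif_pos hp, dif_pos hq]
      exact (s.orderEmbOfFin hcard).strictMono (show (⟨p, hp⟩ : Fin (m+1)) < ⟨q, hq⟩ from hpq)
    · rcases lt_or_ge p (m+1) with hp | hp
      · rw [dif_pos hp, dif_neg (by omega)]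
        have h1 : f ⟨p, hp⟩ ≤ f ⟨m, hm1⟩ :=
          (s.orderEmbOfFin hcard).monotone (show (⟨p, hp⟩ : Fin (m+1)) ≤ ⟨m, hm1⟩ from by
            simp only [Fin.mk_le_mk]; omega)
        have h2 : (1 : ℝ) ≤ (q : ℝ) - m := by
          have : (m + 1 : ℝ) ≤ q := by exact_mod_cast hq
          linarith
        linarith
      · rw [dif_neg (by omega), dif_neg (by omega)]
        have : (p : ℝ) < q := by exact_mod_cast hpq
        linarith
  · apply Finset.eq_of_subset_of_card_le
    · intro ν hν
      rw [Finset.mem_image] at hν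
      obtain ⟨j, hj, rfl⟩ := hν
      rw [Finset.mem_Icc] at hj
      have hjm : j < m + 1 := by omega
      simp only [dif_pos hjm]
      exact Finset.orderEmbOfFin_mem s hcard ⟨j, hjm⟩
    · rw [hcard]
      have : ((Icc 0 m).image (fun j =>
          if h : j < m + 1 then f ⟨j, h⟩ else f ⟨m, hm1⟩ + (j - m : ℝ))).card
          = (Icc 0 m).card := by
        apply Finset.card_image_of_injOn
        intro p hp q hq hpq
        simp only [Finset.coe_Icc, Set.mem_Icc] at hp hq
        have hp1 : p < m + 1 := by omega
        have hq1 : q < m + 1 := by omega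
        simp only [dif_pos hp1, dif_pos hq1] at hpq
        have := (s.orderEmbOfFin hcard).injective hpq
        exact congrArg Fin.val this
      rw [this, Nat.card_Icc]
      omega

/-- Transfer a Lagrange-type sum over a finite set of reals to a divided difference. -/
lemma transfer (s : Finset ℝ) (m : ℕ) (hcard : s.card = m + 1) (g : ℝ → ℝ) :
    ∃ x : ℕ → ℝ, StrictMono x ∧
      ∑ ν ∈ s, g ν / ∏ μ ∈ s.erase ν, (ν - μ) = dd x g 0 m := by
  obtain ⟨x, hx, himg⟩ := exists_enum s m hcard
  refine ⟨x, hx, ?_⟩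
  have hinj : Set.InjOn x ↑(Icc 0 m) := hx.injective.injOn
  have herase : ∀ i ∈ Icc 0 m, s.erase (x i) = ((Icc 0 m).erase i).image x := by
    intro i hi
    ext μ
    simp only [Finset.mem_erase, Finset.mem_image, ← himg]
    constructor
    · rintro ⟨hne, j, hj, rfl⟩
      exact ⟨j, ⟨fun h => hne (by rw [h]), hj⟩, rfl⟩
    · rintro ⟨j, ⟨hji, hj⟩, rfl⟩
      exact ⟨fun h => hji (hx.injective h), j, hj, rfl⟩
  rw [← himg, Finset.sum_image hinj]
  rw [dd_eq_sum hx g m 0 m (by omega) (by omega)]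
  apply Finset.sum_congr rfl
  intro i hi
  congr 1
  rw [himg, herase i hi, Finset.prod_image]
  intro p hp q hq hpq
  exact hx.injective hpq

/-- Non-negativity for arbitrary node sets. -/
lemma key_nonneg (m : ℕ) (hm : 1 ≤ m) (s : Finset ℝ) (hcard : s.card = m + 1) (t : ℝ) :
    0 ≤ ∑ ν ∈ s, (if t < ν then (ν - t)^(m-1) else 0) / ∏ μ ∈ s.erase ν, (ν - μ) := by
  obtain ⟨x, hx, heq⟩ := transfer s m hcard (fun y => if t < y then (y - t)^(m-1) else 0)
  rw [heq]
  exact dd_trunc_nonneg hx m 0 m t (by omega) hm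

/-- Vanishing of the Lagrange sum for powers of too-low degree. -/
lemma key_zero (m d : ℕ) (hd : d < m) (s : Finset ℝ) (hcard : s.card = m + 1) (t : ℝ) :
    ∑ ν ∈ s, (ν - t)^d / ∏ μ ∈ s.erase ν, (ν - μ) = 0 := by
  obtain ⟨x, hx, heq⟩ := transfer s m hcard (fun y => (y - t)^d)
  rw [heq]
  exact dd_pow hx t d 0 m (by omega)

section Analytic

open Filter Topology

variable {ι : Type*} [DecidableEq ι]

/-- The denominator, as a function of the parameter `ε` and the variable `w`. -/
noncomputable def Dden (u : Finset ι) (μ : ι → ℝ) (lam0 ε w : ℝ) : ℝ :=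
  (w - lam0) * ∏ k ∈ u, ((w - μ k) * (w - μ k - ε))

/-- The `w`-derivative of `Dden`. -/
noncomputable def Dden' (u : Finset ι) (μ : ι → ℝ) (lam0 ε w : ℝ) : ℝ :=
  (∏ k ∈ u, ((w - μ k) * (w - μ k - ε)))
    + (w - lam0) * ∑ k ∈ u, (∏ j ∈ u.erase k, ((w - μ j) * (w - μ j - ε)))
        * ((w - μ k - ε) + (w - μ k))

/-- The `w`-derivative of `-(w-t)^p / Dden`. -/
noncomputable def Efun (u : Finset ι) (μ : ι → ℝ) (lam0 t : ℝ) (p : ℕ) (ε w : ℝ) : ℝ :=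
  (-((p:ℝ) * (w - t)^(p-1)) * Dden u μ lam0 ε w
    - (-(w - t)^p) * Dden' u μ lam0 ε w) / (Dden u μ lam0 ε w)^2

lemma hasDerivAt_Dden (u : Finset ι) (μ : ι → ℝ) (lam0 ε w : ℝ) :
    HasDerivAt (Dden u μ lam0 ε) (Dden' u μ lam0 ε w) w := by
  have hprod : HasDerivAt (fun y => ∏ k ∈ u, ((y - μ k) * (y - μ k - ε)))
      (∑ k ∈ u, (∏ j ∈ u.erase k, ((w - μ j) * (w - μ j - ε)))
        * ((w - μ k - ε) + (w - μ k))) w := by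
    have h := HasDerivAt.finset_prod (u := u)
      (f := fun k y => (y - μ k) * (y - μ k - ε))
      (f' := fun k => 1 * (w - μ k - ε) + (w - μ k) * 1) (x := w)
      (fun k _ => ((hasDerivAt_id w).sub_const (μ k)).mul
        (((hasDerivAt_id w).sub_const (μ k)).sub_const ε))
    have heq : (∑ i ∈ u, (∏ j ∈ u.erase i, ((w - μ j) * (w - μ j - ε)))
          • (1 * (w - μ i - ε) + (w - μ i) * 1))
        = ∑ k ∈ u, (∏ j ∈ u.erase k, ((w - μ j) * (w - μ j - ε)))
            * ((w - μ k - ε) + (w - μ k)) := by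
      apply Finset.sum_congr rfl
      intro k _
      rw [smul_eq_mul]
      ring
    rw [heq] at h
    have hf : (fun y => ∏ k ∈ u, ((y - μ k) * (y - μ k - ε)))
        = ∏ i ∈ u, fun y => (y - μ i) * (y - μ i - ε) := by
      funext y
      rw [Finset.prod_apply]
    rw [hf]
    exact h
  have h2 := ((hasDerivAt_id w).sub_const lam0).mul hprod
  simp only [id_eq, one_mul] at h2
  exact h2

lemma continuous_Dden (u : Finset ι) (μ : ι → ℝ) (lam0 : ℝ) :
    Continuous (fun q : ℝ × ℝ => Dden u μ lam0 q.1 q.2) := by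
  unfold Dden
  exact (continuous_snd.sub continuous_const).mul
    (continuous_finset_prod _ (fun k _ =>
      ((continuous_snd.sub continuous_const).mul
        ((continuous_snd.sub continuous_const).sub continuous_fst))))

lemma continuous_Dden' (u : Finset ι) (μ : ι → ℝ) (lam0 : ℝ) :
    Continuous (fun q : ℝ × ℝ => Dden' u μ lam0 q.1 q.2) := by
  unfold Dden'
  apply Continuous.add
  · exact continuous_finset_prod _ (fun k _ =>
      ((continuous_snd.sub continuous_const).mul
        ((continuous_snd.sub continuous_const).sub continuous_fst)))
  · exact (continuous_snd.sub continuous_const).mul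
      (continuous_finset_sum _ (fun k _ =>
        ((continuous_finset_prod _ (fun j _ =>
          ((continuous_snd.sub continuous_const).mul
            ((continuous_snd.sub continuous_const).sub continuous_fst)))).mul
          (((continuous_snd.sub continuous_const).sub continuous_fst).add
            (continuous_snd.sub continuous_const)))))

lemma hasDerivAt_quot (u : Finset ι) (μ : ι → ℝ) (lam0 t : ℝ) (p : ℕ) (ε w : ℝ)
    (h : Dden u μ lam0 ε w ≠ 0) :
    HasDerivAt (fun y => -(y - t)^p / Dden u μ lam0 ε y) (Efun u μ lam0 t p ε w) w := by
  have hN : HasDerivAt (fun y : ℝ => -(y - t)^p) (-((p:ℝ) * (w - t)^(p-1))) w := by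
    have h3 := (((hasDerivAt_id w).sub_const t).pow p).neg
    simp only [id_eq, mul_one] at h3
    exact h3
  exact hN.div (hasDerivAt_Dden u μ lam0 ε w) h

lemma continuousAt_Efun (u : Finset ι) (μ : ι → ℝ) (lam0 t : ℝ) (p : ℕ) (q : ℝ × ℝ)
    (h : Dden u μ lam0 q.1 q.2 ≠ 0) :
    ContinuousAt (fun q : ℝ × ℝ => Efun u μ lam0 t p q.1 q.2) q := by
  unfold Efun
  apply ContinuousAt.div
  · apply ContinuousAt.sub
    · exact (((continuous_const.mul ((continuous_snd.sub continuous_const).pow (p-1))).neg).mul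
        (continuous_Dden u μ lam0)).continuousAt
    · exact ((((continuous_snd.sub continuous_const).pow p).neg).mul
        (continuous_Dden' u μ lam0)).continuousAt
  · exact ((continuous_Dden u μ lam0).pow 2).continuousAt
  · exact pow_ne_zero _ h

/-- The central limit: the symmetrized pair difference quotient converges to the
derivative of the limiting function. -/
lemma pair_slope_tendsto (u : Finset ι) (μ : ι → ℝ) (lam0 c t : ℝ)
    (h0 : lam0 ≠ c) (hμ : ∀ k ∈ u, μ k ≠ c) (p : ℕ) :
    Tendsto (fun ε : ℝ =>
        (-(c + ε - t)^p / Dden u μ lam0 ε (c + ε) - -(c - t)^p / Dden u μ lam0 ε c) / ε)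
      (𝓝[>] 0)
      (𝓝 (deriv (fun w => -(w - t)^p / ((w - lam0) * ∏ k ∈ u, (w - μ k)^2)) c)) := by
  have hD0 : Dden u μ lam0 0 c ≠ 0 := by
    unfold Dden
    apply mul_ne_zero (sub_ne_zero.2 (Ne.symm h0))
    rw [Finset.prod_ne_zero_iff]
    intro k hk
    rw [sub_zero]
    exact mul_ne_zero (sub_ne_zero.2 (Ne.symm (hμ k hk))) (sub_ne_zero.2 (Ne.symm (hμ k hk)))
  -- the limiting derivative is `Efun 0 c`
  have hfun : (fun w => -(w - t)^p / ((w - lam0) * ∏ k ∈ u, (w - μ k)^2))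
      = fun w => -(w - t)^p / Dden u μ lam0 0 w := by
    funext w
    unfold Dden
    congr 2
    apply Finset.prod_congr rfl
    intro k _
    rw [sub_zero, sq]
  have hderiv0 : deriv (fun w => -(w - t)^p / ((w - lam0) * ∏ k ∈ u, (w - μ k)^2)) c
      = Efun u μ lam0 t p 0 c := by
    rw [hfun]
    exact (hasDerivAt_quot u μ lam0 t p 0 c hD0).deriv
  rw [hderiv0]
  -- eventual nonvanishing of the denominator near (0, c)
  have hop : ∀ᶠ q : ℝ × ℝ in 𝓝 ((0 : ℝ), c), Dden u μ lam0 q.1 q.2 ≠ 0 :=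
    (continuous_Dden u μ lam0).continuousAt.eventually_ne hD0
  rw [Metric.eventually_nhds_iff] at hop
  obtain ⟨η, hη, hball⟩ := hop
  have hball' : ∀ ε w : ℝ, |ε| < η → |w - c| < η → Dden u μ lam0 ε w ≠ 0 := by
    intro ε w h1 h2
    apply hball (y := (ε, w))
    rw [Prod.dist_eq]
    apply max_lt
    · rwa [Real.dist_eq, sub_zero]
    · rwa [Real.dist_eq]
  -- mean value theorem
  have hmvt : ∀ ε : ℝ, 0 < ε → ε < η → ∃ ξ, ξ ∈ Set.Ioo c (c + ε) ∧
      Efun u μ lam0 t p ε ξ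
        = (-(c + ε - t)^p / Dden u μ lam0 ε (c + ε) - -(c - t)^p / Dden u μ lam0 ε c) / ε := by
    intro ε hε hεη
    have hIcc : ∀ w ∈ Set.Icc c (c + ε), Dden u μ lam0 ε w ≠ 0 := by
      intro w hw
      apply hball' ε w (by rwa [abs_of_pos hε])
      rw [abs_of_nonneg (sub_nonneg.2 hw.1)]
      have := hw.2
      linarith
    have hcont : ContinuousOn (fun y => -(y - t)^p / Dden u μ lam0 ε y) (Set.Icc c (c + ε)) :=
      fun w hw => ((hasDerivAt_quot u μ lam0 t p ε w (hIcc w hw)).continuousAt).continuousWithinAt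
    have hdiff : ∀ w ∈ Set.Ioo c (c + ε),
        HasDerivAt (fun y => -(y - t)^p / Dden u μ lam0 ε y) (Efun u μ lam0 t p ε w) w :=
      fun w hw => hasDerivAt_quot u μ lam0 t p ε w (hIcc w (Set.Ioo_subset_Icc_self hw))
    obtain ⟨ξ, hmem, heq⟩ := exists_hasDerivAt_eq_slope _ _ (by linarith : c < c + ε) hcont hdiff
    refine ⟨ξ, hmem, ?_⟩
    rw [heq, add_sub_cancel_left]
  have hmvt' : ∀ ε : ℝ, ∃ ξ : ℝ, 0 < ε → ε < η → ξ ∈ Set.Ioo c (c + ε) ∧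
      Efun u μ lam0 t p ε ξ
        = (-(c + ε - t)^p / Dden u μ lam0 ε (c + ε) - -(c - t)^p / Dden u μ lam0 ε c) / ε := by
    intro ε
    by_cases h : 0 < ε ∧ ε < η
    · obtain ⟨ξ, hmem, heq⟩ := hmvt ε h.1 h.2
      exact ⟨ξ, fun _ _ => ⟨hmem, heq⟩⟩
    · exact ⟨c, fun h1 h2 => absurd ⟨h1, h2⟩ h⟩
  choose ξf hξf using hmvt'
  have hevη : ∀ᶠ ε in 𝓝[>] (0:ℝ), ε < η :=
    Filter.Eventually.filter_mono nhdsWithin_le_nhds (gt_mem_nhds hη)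
  have hevpos : ∀ᶠ ε in 𝓝[>] (0:ℝ), 0 < ε := self_mem_nhdsWithin
  -- ξf tends to c
  have hξtend : Tendsto ξf (𝓝[>] (0:ℝ)) (𝓝 c) := by
    have htop : Tendsto (fun ε : ℝ => c + ε) (𝓝[>] (0:ℝ)) (𝓝 c) := by
      have h4 : Tendsto (fun ε : ℝ => c + ε) (𝓝 (0:ℝ)) (𝓝 (c + 0)) :=
        (continuous_const.add continuous_id).tendsto 0
      rw [add_zero] at h4
      exact h4.mono_left nhdsWithin_le_nhds
    apply tendsto_of_tendsto_of_tendsto_of_le_of_le' tendsto_const_nhds htop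
    · filter_upwards [hevη, hevpos] with ε h1 h2
      exact le_of_lt ((hξf ε h2 h1).1.1)
    · filter_upwards [hevη, hevpos] with ε h1 h2
      exact le_of_lt ((hξf ε h2 h1).1.2)
  have hpair : Tendsto (fun ε => ((ε, ξf ε) : ℝ × ℝ)) (𝓝[>] (0:ℝ)) (𝓝 ((0:ℝ), c)) :=
    (tendsto_id.mono_right nhdsWithin_le_nhds).prodMk_nhds hξtend
  have hEtend : Tendsto (fun ε => Efun u μ lam0 t p ε (ξf ε)) (𝓝[>] (0:ℝ))
      (𝓝 (Efun u μ lam0 t p 0 c)) := by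
    have hc : Tendsto (fun q : ℝ × ℝ => Efun u μ lam0 t p q.1 q.2) (𝓝 ((0:ℝ), c))
        (𝓝 (Efun u μ lam0 t p 0 c)) := continuousAt_Efun u μ lam0 t p ((0:ℝ), c) hD0
    have h1 := hc.comp hpair
    simpa [Function.comp_def] using h1
  apply hEtend.congr'
  filter_upwards [hevη, hevpos] with ε h1 h2
  exact (hξf ε h2 h1).2

end Analytic

section Assembly

open Filter Topology

variable {n : ℕ} (lam : Fin n → ℝ) (lam0 t : ℝ)

/-- The perturbed node family: `lam0`, the `lam i`, and the `lam i + ε`. -/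
def nodes (ε : ℝ) (o : Option (Fin n × Bool)) : ℝ :=
  o.elim lam0 (fun x => if x.2 then lam x.1 + ε else lam x.1)

@[simp] lemma nodes_none (ε : ℝ) : nodes lam lam0 ε none = lam0 := rfl
@[simp] lemma nodes_some_false (ε : ℝ) (i : Fin n) :
    nodes lam lam0 ε (some (i, false)) = lam i := rfl
@[simp] lemma nodes_some_true (ε : ℝ) (i : Fin n) :
    nodes lam lam0 ε (some (i, true)) = lam i + ε := rfl

lemma nodes_injective (hdist : Function.Injective lam) (hlam0 : ∀ i, lam0 ≠ lam i)
    (ε : ℝ) (hε : 0 < ε)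
    (h1 : ∀ i j : Fin n, lam i < lam j → ε < lam j - lam i)
    (h2 : ∀ i : Fin n, lam i < lam0 → ε < lam0 - lam i) :
    Function.Injective (nodes lam lam0 ε) := by
  have key : ∀ i j : Fin n, lam i = lam j + ε → False := by
    intro i j h
    have hji : lam j < lam i := by linarith
    have := h1 j i hji
    linarith
  have key2 : ∀ j : Fin n, lam0 = lam j + ε → False := by
    intro j h
    have hj : lam j < lam0 := by linarith
    have := h2 j hj
    linarith
  intro a b hab
  rcases a with _ | ⟨i, _ | _⟩ <;> rcases b with _ | ⟨j, _ | _⟩ <;>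
    simp only [nodes_none, nodes_some_false, nodes_some_true] at hab
  · rfl
  · exact absurd hab (hlam0 j)
  · exact absurd hab (fun h => key2 j h)
  · exact absurd hab.symm (hlam0 i)
  · rw [hdist hab]
  · exact absurd hab (fun h => key i j h)
  · exact absurd hab.symm (fun h => key2 i h)
  · exact absurd hab.symm (fun h => key j i h)
  · have : lam i = lam j := by linarith
    rw [hdist this]

/-- Rewrite a product over `univ.erase a` as a full product of `ite`s. -/
lemma prod_erase_ite {α : Type*} [DecidableEq α] [Fintype α] (a : α) (F : α → ℝ) :
    ∏ x ∈ (univ : Finset α).erase a, F x = ∏ x : α, (if x = a then 1 else F x) := by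
  rw [← Finset.mul_prod_erase univ (fun x => if x = a then 1 else F x) (Finset.mem_univ a)]
  rw [if_pos rfl, one_mul]
  apply Finset.prod_congr rfl
  intro x hx
  rw [if_neg (Finset.ne_of_mem_erase hx)]

/-- Product over all nodes except `none`. -/
lemma prod_erase_none (F : Option (Fin n × Bool) → ℝ) :
    ∏ o ∈ (univ : Finset (Option (Fin n × Bool))).erase none, F o
      = ∏ i : Fin n, (F (some (i, true)) * F (some (i, false))) := by
  rw [prod_erase_ite, Fintype.prod_option]
  rw [if_pos rfl, one_mul]
  rw [Fintype.prod_prod_type (fun x : Fin n × Bool =>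
    if (some x : Option (Fin n × Bool)) = none then 1 else F (some x))]
  apply Finset.prod_congr rfl
  intro i _
  rw [Fintype.prod_bool (fun b =>
    if (some (i, b) : Option (Fin n × Bool)) = none then 1 else F (some (i, b)))]
  rw [if_neg (by simp), if_neg (by simp)]

/-- Product over all nodes except `some (i₀, b₀)`. -/
lemma prod_erase_some (F : Option (Fin n × Bool) → ℝ) (i₀ : Fin n) (b₀ : Bool) :
    ∏ o ∈ (univ : Finset (Option (Fin n × Bool))).erase (some (i₀, b₀)), F o
      = F none * ((if b₀ then F (some (i₀, false)) else F (some (i₀, true)))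
          * ∏ i ∈ univ.erase i₀, (F (some (i, true)) * F (some (i, false)))) := by
  rw [prod_erase_ite, Fintype.prod_option]
  rw [if_neg (by simp)]
  congr 1
  rw [Fintype.prod_prod_type (fun x : Fin n × Bool =>
    if (some x : Option (Fin n × Bool)) = some (i₀, b₀) then 1 else F (some x))]
  rw [← Finset.mul_prod_erase univ _ (Finset.mem_univ i₀)]
  congr 1
  · rw [Fintype.prod_bool (fun b =>
      if (some (i₀, b) : Option (Fin n × Bool)) = some (i₀, b₀) then 1 else F (some (i₀, b)))]
    rcases b₀ with _ | _
    · rw [if_neg (by simp), if_pos rfl]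
      simp
    · rw [if_pos rfl, if_neg (by simp)]
      simp
  · apply Finset.prod_congr rfl
    intro i hi
    have hii : i ≠ i₀ := Finset.ne_of_mem_erase hi
    rw [Fintype.prod_bool (fun b =>
      if (some (i, b) : Option (Fin n × Bool)) = some (i₀, b₀) then 1 else F (some (i, b)))]
    rw [if_neg (by simp [hii]), if_neg (by simp [hii])]

/-- The `lam0` part of the approximating sum. -/
noncomputable def c0fun (ε : ℝ) : ℝ :=
  if lam0 < t then
    -((lam0 - t)^(2*n-1) / ∏ k : Fin n, ((lam0 - lam k) * (lam0 - lam k - ε)))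
  else 0

/-- The `lam i` part of the approximating sum. -/
noncomputable def cifun (i : Fin n) (ε : ℝ) : ℝ :=
  if lam i < t then
    (-(lam i + ε - t)^(2*n-1) / Dden (univ.erase i) lam lam0 ε (lam i + ε)
      - -(lam i - t)^(2*n-1) / Dden (univ.erase i) lam lam0 ε (lam i)) / ε
  else 0

/-- The approximating sum. -/
noncomputable def Sfun (ε : ℝ) : ℝ :=
  c0fun lam lam0 t ε + ∑ i : Fin n, cifun lam lam0 t i ε

lemma Sfun_nonneg (hdist : Function.Injective lam) (hlam0 : ∀ i, lam0 ≠ lam i) (hn : 2 ≤ n)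
    (ε : ℝ) (hε : 0 < ε)
    (h1 : ∀ i j : Fin n, lam i < lam j → ε < lam j - lam i)
    (h2 : ∀ i : Fin n, lam i < lam0 → ε < lam0 - lam i)
    (h3 : ∀ i : Fin n, lam i < t → ε < t - lam i) :
    0 ≤ Sfun lam lam0 t ε := by
  classical
  have hp1 : 1 ≤ 2*n - 1 := by omega
  set ν := nodes lam lam0 ε with hν
  have hinj : Function.Injective ν := nodes_injective lam lam0 hdist hlam0 ε hε h1 h2
  have hne : ∀ a b, a ≠ b → ν a - ν b ≠ 0 :=
    fun a b h => sub_ne_zero.2 (fun he => h (hinj he))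
  set s : Finset ℝ := Finset.image ν univ with hs
  have hcard : s.card = 2*n + 1 := by
    rw [hs, Finset.card_image_of_injective _ hinj, Finset.card_univ]
    simp only [Fintype.card_option, Fintype.card_prod, Fintype.card_bool, Fintype.card_fin]
    omega
  -- transfer sums over `s` to sums over the index type
  have himg : ∀ (g : ℝ → ℝ), (∑ x ∈ s, g x / ∏ y ∈ s.erase x, (x - y))
      = ∑ a : Option (Fin n × Bool), g (ν a) / ∏ b ∈ univ.erase a, (ν a - ν b) := by
    intro g
    rw [hs, Finset.sum_image (fun a _ b _ h => hinj h)]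
    apply Finset.sum_congr rfl
    intro a _
    congr 1
    rw [← Finset.image_erase hinj, Finset.prod_image (fun x _ y _ h => hinj h)]
  have hkey := key_nonneg (2*n) (by omega) s (by rw [hcard]) t
  have hzero := key_zero (2*n) (2*n-1) (by omega) s (by rw [hcard]) t
  rw [himg] at hkey
  rw [himg (fun x => (x - t)^(2*n-1))] at hzero
  -- decompose the truncated sum
  have hsplit : ∀ a : Option (Fin n × Bool),
      (if t < ν a then (ν a - t)^(2*n-1) else 0) / ∏ b ∈ univ.erase a, (ν a - ν b)
        = (ν a - t)^(2*n-1) / ∏ b ∈ univ.erase a, (ν a - ν b)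
          - (if ν a ≤ t then (ν a - t)^(2*n-1) / ∏ b ∈ univ.erase a, (ν a - ν b) else 0) := by
    intro a
    rcases lt_or_ge t (ν a) with h | h
    · rw [if_pos h, if_neg (by exact not_le.2 h)]
      ring
    · rw [if_neg (not_lt.2 h), if_pos h, zero_div]
      ring
  rw [Finset.sum_congr rfl (fun a _ => hsplit a), Finset.sum_sub_distrib, hzero,
    zero_sub] at hkey
  -- hence the non-truncated lower sum is ≤ 0; identify it with -Sfun
  suffices hS : Sfun lam lam0 t ε = - ∑ a : Option (Fin n × Bool),
      (if ν a ≤ t then (ν a - t)^(2*n-1) / ∏ b ∈ univ.erase a, (ν a - ν b) else 0) by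
    rw [hS]
    linarith [hkey]
  rw [Fintype.sum_option, Fintype.sum_prod_type]
  have hbool : ∀ i : Fin n, (∑ b : Bool,
      (if ν (some (i, b)) ≤ t then
        (ν (some (i, b)) - t)^(2*n-1) / ∏ c ∈ univ.erase (some (i, b)), (ν (some (i, b)) - ν c)
      else 0))
      = (if ν (some (i, true)) ≤ t then
        (ν (some (i, true)) - t)^(2*n-1) / ∏ c ∈ univ.erase (some (i, true)), (ν (some (i, true)) - ν c) else 0)
        + (if ν (some (i, false)) ≤ t then
        (ν (some (i, false)) - t)^(2*n-1) / ∏ c ∈ univ.erase (some (i, false)), (ν (some (i, false)) - ν c) else 0) := by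
    intro i
    exact Fintype.sum_bool _
  rw [Finset.sum_congr rfl (fun i _ => hbool i)]
  -- the `lam0` term
  have hQ0 : (∏ b ∈ univ.erase (none : Option (Fin n × Bool)), (ν none - ν b))
      = ∏ k : Fin n, ((lam0 - lam k) * (lam0 - lam k - ε)) := by
    rw [prod_erase_none]
    apply Finset.prod_congr rfl
    intro k _
    simp only [hν, nodes_none, nodes_some_true, nodes_some_false]
    ring
  have hc0 : c0fun lam lam0 t ε
      = -(if ν none ≤ t then
          (ν none - t)^(2*n-1) / ∏ b ∈ univ.erase (none : Option (Fin n × Bool)), (ν none - ν b)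
        else 0) := by
    rw [hQ0]
    simp only [hν, nodes_none]
    unfold c0fun
    rcases lt_trichotomy lam0 t with h | h | h
    · rw [if_pos h, if_pos (le_of_lt h)]
    · rw [if_neg (by rw [h]; exact lt_irrefl t), if_pos (le_of_eq h)]
      rw [h, sub_self, zero_pow (by omega : 2*n-1 ≠ 0), zero_div, neg_zero]
    · rw [if_neg (not_lt.2 (le_of_lt h)), if_neg (not_le.2 h), neg_zero]
  -- the pair terms
  have hci : ∀ i ∈ (univ : Finset (Fin n)), cifun lam lam0 t i ε
      = -((if ν (some (i, true)) ≤ t then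
            (ν (some (i, true)) - t)^(2*n-1)
              / ∏ c ∈ univ.erase (some (i, true)), (ν (some (i, true)) - ν c) else 0)
          + (if ν (some (i, false)) ≤ t then
            (ν (some (i, false)) - t)^(2*n-1)
              / ∏ c ∈ univ.erase (some (i, false)), (ν (some (i, false)) - ν c) else 0)) := by
    intro i _
    have hQf : (∏ c ∈ univ.erase (some (i, false) : Option (Fin n × Bool)),
          (ν (some (i, false)) - ν c))
        = -ε * Dden (univ.erase i) lam lam0 ε (lam i) := by
      have hp := prod_erase_some (fun o => ν (some (i, false)) - ν o) i false
      simp only [Bool.false_eq_true, if_false] at hp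
      rw [hp]
      simp only [hν, nodes_none, nodes_some_true, nodes_some_false]
      have hfac : ∏ k ∈ univ.erase i, ((lam i - (lam k + ε)) * (lam i - lam k))
          = ∏ k ∈ univ.erase i, ((lam i - lam k) * (lam i - lam k - ε)) :=
        Finset.prod_congr rfl (fun k _ => by ring)
      rw [hfac]
      unfold Dden
      ring
    have hQt : (∏ c ∈ univ.erase (some (i, true) : Option (Fin n × Bool)),
          (ν (some (i, true)) - ν c))
        = ε * Dden (univ.erase i) lam lam0 ε (lam i + ε) := by
      have hp := prod_erase_some (fun o => ν (some (i, true)) - ν o) i true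
      simp only [if_true] at hp
      rw [hp]
      simp only [hν, nodes_none, nodes_some_true, nodes_some_false]
      have hfac : ∏ k ∈ univ.erase i, ((lam i + ε - (lam k + ε)) * (lam i + ε - lam k))
          = ∏ k ∈ univ.erase i, ((lam i + ε - lam k) * (lam i + ε - lam k - ε)) :=
        Finset.prod_congr rfl (fun k _ => by ring)
      rw [hfac]
      unfold Dden
      ring
    have hDf : Dden (univ.erase i) lam lam0 ε (lam i) ≠ 0 := by
      unfold Dden
      apply mul_ne_zero (sub_ne_zero.2 (fun h => hlam0 i h.symm))
      rw [Finset.prod_ne_zero_iff]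
      intro k hk
      have hki : k ≠ i := Finset.ne_of_mem_erase hk
      apply mul_ne_zero
      · exact sub_ne_zero.2 (fun h => hki (hdist h).symm)
      · have h5 := hne (some (i, false)) (some (k, true)) (by simp)
        simp only [hν, nodes_some_false, nodes_some_true] at h5
        intro h6
        apply h5
        linarith
    have hDt : Dden (univ.erase i) lam lam0 ε (lam i + ε) ≠ 0 := by
      unfold Dden
      apply mul_ne_zero
      · have h5 := hne (some (i, true)) none (by simp)
        simpa [hν] using h5
      rw [Finset.prod_ne_zero_iff]
      intro k hk
      have hki : k ≠ i := Finset.ne_of_mem_erase hk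
      apply mul_ne_zero
      · have h5 := hne (some (i, true)) (some (k, false)) (by simp)
        simpa [hν] using h5
      · have h7 : lam i - lam k ≠ 0 := sub_ne_zero.2 (fun h => hki (hdist h).symm)
        intro h6
        apply h7
        linarith
    rw [hQf, hQt]
    simp only [hν, nodes_some_true, nodes_some_false]
    unfold cifun
    have hεne : ε ≠ 0 := ne_of_gt hε
    rcases lt_trichotomy (lam i) t with h | h | h
    · have h3' := h3 i h
      rw [if_pos h, if_pos (by linarith : lam i + ε ≤ t), if_pos (le_of_lt h)]
      field_simp
      ring
    · rw [if_neg (by rw [h]; exact lt_irrefl t),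
        if_neg (by rw [h]; intro hcon; linarith : ¬ (lam i + ε ≤ t)),
        if_pos (le_of_eq h), h, sub_self, zero_pow (by omega : 2*n-1 ≠ 0), zero_div]
      ring
    · rw [if_neg (not_lt.2 (le_of_lt h)),
        if_neg (by intro hcon; linarith : ¬ (lam i + ε ≤ t)),
        if_neg (by intro hcon; linarith : ¬ (lam i ≤ t))]
      ring
  unfold Sfun
  rw [hc0, Finset.sum_congr rfl hci, neg_add, ← Finset.sum_neg_distrib]

lemma Sfun_tendsto (hdist : Function.Injective lam) (hlam0 : ∀ i, lam0 ≠ lam i) :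
    Tendsto (Sfun lam lam0 t) (𝓝[>] 0) (𝓝 (
      (if lam0 < t then -(lam0 - t)^(2*n-1) / ∏ k : Fin n, (lam0 - lam k)^2 else 0)
      + ∑ i : Fin n, (if lam i < t then
          deriv (fun w => -(w - t)^(2*n-1)
            / ((w - lam0) * ∏ k ∈ univ.erase i, (w - lam k)^2)) (lam i)
        else 0))) := by
  unfold Sfun
  apply Tendsto.add
  · unfold c0fun
    by_cases h : lam0 < t
    · simp only [if_pos h]
      have hden : Tendsto (fun ε : ℝ => ∏ k : Fin n, ((lam0 - lam k) * (lam0 - lam k - ε)))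
          (𝓝 0) (𝓝 (∏ k : Fin n, ((lam0 - lam k) * (lam0 - lam k - 0)))) :=
        ((continuous_finset_prod univ (fun k _ =>
          continuous_const.mul (continuous_const.sub continuous_id))).tendsto 0)
      have hval : (∏ k : Fin n, ((lam0 - lam k) * (lam0 - lam k - 0)))
          = ∏ k : Fin n, (lam0 - lam k)^2 := by
        apply Finset.prod_congr rfl
        intro k _
        rw [sub_zero, sq]
      rw [hval] at hden
      have hne0 : (∏ k : Fin n, (lam0 - lam k)^2) ≠ 0 := by
        rw [Finset.prod_ne_zero_iff]
        intro k _
        exact pow_ne_zero _ (sub_ne_zero.2 (hlam0 k))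
      have h6 : Tendsto (fun _ : ℝ => (lam0 - t)^(2*n-1)) (𝓝 0)
          (𝓝 ((lam0 - t)^(2*n-1))) := tendsto_const_nhds
      have h7 := (h6.div hden hne0).neg
      rw [show -((lam0 - t)^(2*n-1) / ∏ k : Fin n, (lam0 - lam k)^2)
        = -(lam0 - t)^(2*n-1) / ∏ k : Fin n, (lam0 - lam k)^2 by rw [neg_div]] at h7
      exact h7.mono_left nhdsWithin_le_nhds
    · simp only [if_neg h]
      exact tendsto_const_nhds
  · apply tendsto_finset_sum
    intro i _
    unfold cifun
    by_cases h : lam i < t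
    · simp only [if_pos h]
      exact pair_slope_tendsto (univ.erase i) lam lam0 (lam i) t (hlam0 i)
        (fun k hk he => (Finset.ne_of_mem_erase hk) (hdist he)) (2*n-1)
    · simp only [if_neg h]
      exact tendsto_const_nhds

end Assembly




end Stmt13Aux

open Filter Topology in
/-- Non-negativity of the weight `J_{λ₀}` arising in the integral representation of Kraus
matrices.  The residue at the simple pole `λ₀` is `-(λ₀-t)^(2n-1)/p_Λ(λ₀)^2`; the residue at
the double pole `λᵢ` is the derivative at `λᵢ` of `w ↦ (w-λᵢ)^2 · T_{λ₀}(w,t)`. -/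
theorem stmt13 (n : ℕ) (hn : 2 ≤ n) (lam : Fin n → ℝ) (hdist : Function.Injective lam)
    (lam0 : ℝ) (hlam0 : ∀ i, lam0 ≠ lam i)
    (Jres0 : ℝ → ℝ)
    (hJres0 : ∀ t, Jres0 t = -(lam0 - t) ^ (2 * n - 1) / ∏ k, (lam0 - lam k) ^ 2)
    (Jres : Fin n → ℝ → ℝ)
    (hJres : ∀ i t, Jres i t =
      deriv (fun w : ℝ => -(w - t) ^ (2 * n - 1) /
        ((w - lam0) * ∏ k ∈ univ.erase i, (w - lam k) ^ 2)) (lam i))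
    (J : ℝ → ℝ)
    (hJ : ∀ t, J t = (if lam0 < t then Jres0 t else 0) +
      ∑ i ∈ univ.filter (fun i => lam i < t), Jres i t) :
    ∀ t, 0 ≤ J t := by
  intro t
  classical
  have epos : ∀ᶠ ε in 𝓝[>] (0:ℝ), 0 < ε := self_mem_nhdsWithin
  have e1 : ∀ᶠ ε in 𝓝[>] (0:ℝ), ∀ i j : Fin n, lam i < lam j → ε < lam j - lam i := by
    rw [Filter.eventually_all]
    intro i
    rw [Filter.eventually_all]
    intro j
    by_cases h : lam i < lam j
    · exact (Filter.Eventually.filter_mono nhdsWithin_le_nhds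
        (gt_mem_nhds (sub_pos.2 h))).mono (fun ε hε _ => hε)
    · exact Filter.Eventually.of_forall (fun ε h' => absurd h' h)
  have e2 : ∀ᶠ ε in 𝓝[>] (0:ℝ), ∀ i : Fin n, lam i < lam0 → ε < lam0 - lam i := by
    rw [Filter.eventually_all]
    intro i
    by_cases h : lam i < lam0
    · exact (Filter.Eventually.filter_mono nhdsWithin_le_nhds
        (gt_mem_nhds (sub_pos.2 h))).mono (fun ε hε _ => hε)
    · exact Filter.Eventually.of_forall (fun ε h' => absurd h' h)
  have e3 : ∀ᶠ ε in 𝓝[>] (0:ℝ), ∀ i : Fin n, lam i < t → ε < t - lam i := by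
    rw [Filter.eventually_all]
    intro i
    by_cases h : lam i < t
    · exact (Filter.Eventually.filter_mono nhdsWithin_le_nhds
        (gt_mem_nhds (sub_pos.2 h))).mono (fun ε hε _ => hε)
    · exact Filter.Eventually.of_forall (fun ε h' => absurd h' h)
  have hev : ∀ᶠ ε in 𝓝[>] (0:ℝ), 0 ≤ Stmt13Aux.Sfun lam lam0 t ε := by
    filter_upwards [epos, e1, e2, e3] with ε h0 h1 h2 h3
    exact Stmt13Aux.Sfun_nonneg lam lam0 t hdist hlam0 hn ε h0 h1 h2 h3
  have htend := Stmt13Aux.Sfun_tendsto lam lam0 t hdist hlam0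
  have hge := ge_of_tendsto htend hev
  rw [hJ t, hJres0 t]
  have hEq : (if lam0 < t then -(lam0 - t) ^ (2 * n - 1) / ∏ k, (lam0 - lam k) ^ 2 else 0) +
      ∑ i ∈ univ.filter (fun i => lam i < t), Jres i t
      = (if lam0 < t then -(lam0 - t)^(2*n-1) / ∏ k : Fin n, (lam0 - lam k)^2 else 0)
        + ∑ i : Fin n, (if lam i < t then
            deriv (fun w => -(w - t)^(2*n-1)
              / ((w - lam0) * ∏ k ∈ univ.erase i, (w - lam k)^2)) (lam i)
          else 0) := by
    congr 1
    rw [Finset.sum_filter]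
    apply Finset.sum_congr rfl
    intro i _
    by_cases h : lam i < t
    · rw [if_pos h, if_pos h, hJres i t]
    · rw [if_neg h, if_neg h]
  rw [hEq]
  exact hge
end

section
/- For distinct real numbers λ₁, ..., λₙ, λ₀ and a function f that is C¹ near the λᵢ, the first-order divided difference of g(x) = [x,λ₀]_f satisfies [λᵢ, λⱼ]_g = [λᵢ, λⱼ, λ₀]_f for all 1 ≤ i, j ≤ n; consequently the Loewner matrix of g at (λ₁,...,λₙ) equals the Kraus matrix of f at (λ₁,...,λₙ) with base point λ₀. -/
open Matrix

/-- For distinct `λ₁,…,λₙ, λ₀` and `f` of class `C¹` near the `λᵢ`, the first-order divided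
differences of `g(x) = [x,λ₀]_f` satisfy `[λᵢ,λⱼ]_g = [λᵢ,λⱼ,λ₀]_f`; hence the Loewner
matrix of `g` equals the Kraus matrix of `f` with base point `λ₀`. -/
theorem stmt19 (n : ℕ) (hn : 1 ≤ n) (lam : Fin n → ℝ) (hdist : Function.Injective lam)
    (lam0 : ℝ) (hlam0 : ∀ i, lam0 ≠ lam i)
    (f : ℝ → ℝ) (hf : ∀ i, ContDiffAt ℝ 1 f (lam i))
    (g : ℝ → ℝ)
    (hg : ∀ x, g x = if x = lam0 then deriv f lam0 else (f x - f lam0) / (x - lam0))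
    -- first-order divided differences of `f`
    (dd1 : ℝ → ℝ → ℝ)
    (hdd1 : ∀ x y, dd1 x y = if x = y then deriv f x else (f x - f y) / (x - y)) :
    (∀ i j, (if lam i = lam j then deriv g (lam i)
        else (g (lam i) - g (lam j)) / (lam i - lam j)) =
      (dd1 (lam i) (lam j) - dd1 (lam j) lam0) / (lam i - lam0)) ∧
    (Matrix.of fun i j : Fin n =>
        if lam i = lam j then deriv g (lam i)
        else (g (lam i) - g (lam j)) / (lam i - lam j)) =
      (Matrix.of fun i j : Fin n =>
        (dd1 (lam i) (lam j) - dd1 (lam j) lam0) / (lam i - lam0)) := by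
  have key : ∀ i j, (if lam i = lam j then deriv g (lam i)
        else (g (lam i) - g (lam j)) / (lam i - lam j)) =
      (dd1 (lam i) (lam j) - dd1 (lam j) lam0) / (lam i - lam0) := by
    intro i j
    have hi0 : lam i ≠ lam0 := fun h => hlam0 i h.symm
    have hj0 : lam j ≠ lam0 := fun h => hlam0 j h.symm
    have hi0' : lam i - lam0 ≠ 0 := sub_ne_zero.mpr hi0
    have hj0' : lam j - lam0 ≠ 0 := sub_ne_zero.mpr hj0
    by_cases h : lam i = lam j
    · have hij : i = j := hdist h
      subst hij
      rw [if_pos rfl, hdd1, hdd1, if_pos rfl, if_neg hi0]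
      have hfd : HasDerivAt f (deriv f (lam i)) (lam i) :=
        ((hf i).differentiableAt one_ne_zero).hasDerivAt
      have hdiv : HasDerivAt (fun x => (f x - f lam0) / (x - lam0))
          ((deriv f (lam i) * (lam i - lam0) - (f (lam i) - f lam0) * 1) / (lam i - lam0) ^ 2)
          (lam i) :=
        (hfd.sub_const _).div ((hasDerivAt_id _).sub_const _) hi0'
      have heq : g =ᶠ[nhds (lam i)] fun x => (f x - f lam0) / (x - lam0) := by
        filter_upwards [isOpen_ne.mem_nhds hi0] with x hx
        rw [hg x, if_neg hx]
      rw [Filter.EventuallyEq.deriv_eq heq, hdiv.deriv]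
      field_simp
    · have hij : lam i - lam j ≠ 0 := sub_ne_zero.mpr h
      rw [if_neg h, hg, hg, if_neg hi0, if_neg hj0, hdd1, hdd1, if_neg h, if_neg hj0]
      field_simp
      ring
  refine ⟨key, ?_⟩
  ext i j
  simpa using key i j
end
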